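/- arXiv:2209.05988 — 2 statements merged into one kernel-verified Lean document; each statement's English description precedes it below -/
import Mathlib

section
/- Let γ: ℝ/L → ℝ³ be a minimal inspection curve. Then the set {t ∈ ℝ/L : γ(t) = o} of times at which γ passes through the origin is finite. -/
open Real Set MeasureTheory ENNReal

noncomputable section


noncomputable section

abbrev E3 := EuclideanSpace ℝ (Fin 3)

/-- The lift of a curve `γ : ℝ/L → ℝ³` to `ℝ`, via the quotient map `ℝ → ℝ/L`. -/
def liftCurve (L : ℝ) (γ : AddCircle L → E3) : ℝ → E3 := fun s => γ s

/-- An inspection curve is a closed rectifiable curve `γ : ℝ/L → ℝ³`, parameterized with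
constant unit speed (`1`-Lipschitz with total variation `L` over one period), whose convex
hull contains the unit sphere centered at the origin. -/
def IsInspectionCurve (L : ℝ) (γ : AddCircle L → E3) : Prop :=
  0 < L ∧ Continuous γ ∧ LipschitzWith 1 (liftCurve L γ) ∧
    eVariationOn (liftCurve L γ) (Set.Icc 0 L) = ENNReal.ofReal L ∧
    Metric.sphere (0 : E3) 1 ⊆ convexHull ℝ (Set.range γ)

/-- A minimal inspection curve is an inspection curve of minimal length. -/
def IsMinInspectionCurve (L : ℝ) (γ : AddCircle L → E3) : Prop :=
  IsInspectionCurve L γ ∧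
    ∀ (L' : ℝ) (γ' : AddCircle L' → E3), IsInspectionCurve L' γ' → L ≤ L'

/-- A periodic function which is 1-Lipschitz on one closed period is 1-Lipschitz. -/
lemma lipschitzWith_of_periodic' {f : ℝ → E3} {p : ℝ} (hp : 0 < p)
    (hper : ∀ s, f (s + p) = f s)
    (hf : LipschitzOnWith 1 f (Icc 0 p)) : LipschitzWith 1 f := by
  have hper' : ∀ (k : ℤ) (s : ℝ), f (s + (k : ℝ) * p) = f s := by
    intro k s
    exact (Function.Periodic.int_mul (fun x => hper x) k) s
  have cell : ∀ (k : ℤ) (x y : ℝ), x ∈ Icc ((k : ℝ) * p) (((k : ℝ) + 1) * p) →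
      y ∈ Icc ((k : ℝ) * p) (((k : ℝ) + 1) * p) → dist (f x) (f y) ≤ dist x y := by
    intro k x y hx hy
    have hx' : x - k * p ∈ Icc (0 : ℝ) p := by
      constructor
      · linarith [hx.1]
      · nlinarith [hx.2]
    have hy' : y - k * p ∈ Icc (0 : ℝ) p := by
      constructor
      · linarith [hy.1]
      · nlinarith [hy.2]
    have ex : f x = f (x - k * p) := by
      have h := hper' k (x - k * p); rw [sub_add_cancel] at h; exact h
    have ey : f y = f (y - k * p) := by
      have h := hper' k (y - k * p); rw [sub_add_cancel] at h; exact h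
    rw [ex, ey]
    have := hf.dist_le_mul _ hx' _ hy'
    rw [NNReal.coe_one, one_mul] at this
    refine this.trans (le_of_eq ?_)
    rw [Real.dist_eq, Real.dist_eq]
    congr 1
    ring
  have fl : ∀ z : ℝ, (⌊z / p⌋ : ℝ) * p ≤ z ∧ z < ((⌊z / p⌋ : ℝ) + 1) * p := by
    intro z
    constructor
    · calc (⌊z / p⌋ : ℝ) * p ≤ (z / p) * p := by gcongr; exact Int.floor_le _
        _ = z := div_mul_cancel₀ _ hp.ne'
    · have h1 : z / p < (⌊z / p⌋ : ℝ) + 1 := Int.lt_floor_add_one _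
      have := (div_lt_iff₀ hp).mp h1
      linarith
  have main : ∀ n : ℕ, ∀ x y : ℝ, x ≤ y → (⌊y / p⌋ - ⌊x / p⌋).toNat = n →
      dist (f x) (f y) ≤ y - x := by
    intro n
    induction n with
    | zero =>
      intro x y hxy hn
      have hle : ⌊x / p⌋ ≤ ⌊y / p⌋ := Int.floor_le_floor (by gcongr)
      have heq : ⌊y / p⌋ = ⌊x / p⌋ := by omega
      have hx := fl x
      have hy := fl y
      rw [heq] at hy
      have := cell ⌊x / p⌋ x y ⟨hx.1, hx.2.le⟩ ⟨hy.1, hy.2.le⟩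
      rw [Real.dist_eq, abs_of_nonpos (by linarith)] at this
      linarith
    | succ n ih =>
      intro x y hxy hn
      have hx := fl x
      have hy := fl y
      have hfy : ⌊x / p⌋ + 1 ≤ ⌊y / p⌋ := by omega
      set m := ((⌊x / p⌋ : ℝ) + 1) * p with hm
      have hmy : m ≤ y := by
        have h1 : ((⌊x / p⌋ : ℝ) + 1) ≤ (⌊y / p⌋ : ℝ) := by exact_mod_cast hfy
        nlinarith [hy.1, hp]
      have h1 : dist (f x) (f m) ≤ m - x := by
        have := cell ⌊x / p⌋ x m ⟨hx.1, hx.2.le⟩ ⟨by nlinarith [hp], le_rfl⟩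
        rw [Real.dist_eq, abs_of_nonpos (by linarith [hx.2])] at this
        linarith
      have hm_floor : ⌊m / p⌋ = ⌊x / p⌋ + 1 := by
        have hmp : m / p = ((⌊x / p⌋ + 1 : ℤ) : ℝ) := by
          rw [hm]; push_cast; field_simp
        rw [hmp, Int.floor_intCast]
      have h2 : dist (f m) (f y) ≤ y - m := by
        apply ih m y hmy
        rw [hm_floor]; omega
      calc dist (f x) (f y) ≤ dist (f x) (f m) + dist (f m) (f y) := dist_triangle _ _ _
        _ ≤ (m - x) + (y - m) := by linarith
        _ = y - x := by ring
  apply LipschitzWith.of_dist_le_mul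
  intro x y
  rw [NNReal.coe_one, one_mul]
  rcases le_total x y with h | h
  · have := main _ x y h rfl
    rw [Real.dist_eq, abs_of_nonpos (by linarith)]
    linarith
  · have h2 := main _ y x h rfl
    rw [dist_comm (f x) (f y)]
    rw [Real.dist_eq, abs_of_nonneg (by linarith)]
    linarith

lemma sum3_eq' {a b c A B C : ℝ≥0∞} (hA : A ≠ ⊤) (hB : B ≠ ⊤) (hC : C ≠ ⊤)
    (ha : a ≤ A) (hb : b ≤ B) (hc : c ≤ C) (h : a + b + c = A + B + C) :
    a = A ∧ c = C := by
  have ha' : a ≠ ⊤ := ne_top_of_le_ne_top hA ha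
  have hb' : b ≠ ⊤ := ne_top_of_le_ne_top hB hb
  have hc' : c ≠ ⊤ := ne_top_of_le_ne_top hC hc
  have hto : a.toReal + b.toReal + c.toReal = A.toReal + B.toReal + C.toReal := by
    rw [← ENNReal.toReal_add ha' hb', ← ENNReal.toReal_add (by simp [ha', hb']) hc',
      ← ENNReal.toReal_add hA hB, ← ENNReal.toReal_add (by simp [hA, hB]) hC, h]
  have h1 : a.toReal ≤ A.toReal := ENNReal.toReal_mono hA ha
  have h2 : b.toReal ≤ B.toReal := ENNReal.toReal_mono hB hb
  have h3 : c.toReal ≤ C.toReal := ENNReal.toReal_mono hC hc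
  constructor
  · exact (ENNReal.toReal_eq_toReal_iff' ha' hA).mp (by linarith)
  · exact (ENNReal.toReal_eq_toReal_iff' hc' hC).mp (by linarith)

lemma isCompact_convexHull_E3 {s : Set E3} (hs : IsCompact s) (h0 : (0 : E3) ∈ s) :
    IsCompact (convexHull ℝ s) := by
  classical
  set T : (Fin 4 → ℝ) × (Fin 4 → E3) → E3 := fun q => ∑ i, q.1 i • q.2 i with hT
  have hTc : Continuous T := by
    apply continuous_finset_sum
    intro i _
    exact ((continuous_apply i).comp continuous_fst).smul
      ((continuous_apply i).comp continuous_snd)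
  have hK : IsCompact ((stdSimplex ℝ (Fin 4)) ×ˢ (Set.univ.pi fun _ : Fin 4 => s)) :=
    IsCompact.prod (isCompact_stdSimplex (𝕜 := ℝ) (ι := Fin 4)) (isCompact_univ_pi fun _ => hs)
  have himg : convexHull ℝ s = T '' ((stdSimplex ℝ (Fin 4)) ×ˢ (Set.univ.pi fun _ : Fin 4 => s)) := by
    apply Set.Subset.antisymm
    · intro x hx
      obtain ⟨ι, hι, z, w, hzs, hai, hwpos, hw1, hsum⟩ :=
        eq_pos_convex_span_of_mem_convexHull hx
      haveI := hι
      have hw1' : ∑ i, w i = 1 := by convert hw1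
      have hsum' : ∑ i, w i • z i = x := by convert hsum
      clear hw1 hsum
      have hcard : Fintype.card ι ≤ 4 := by
        rcases isEmpty_or_nonempty ι with he | hne
        · simp [Fintype.card_eq_zero]
        · have h1 := hai.finrank_vectorSpan_add_one
          have h2 : Module.finrank ℝ (vectorSpan ℝ (Set.range z)) ≤ Module.finrank ℝ E3 :=
            Submodule.finrank_le _
          have h3 : Module.finrank ℝ E3 = 3 := finrank_euclideanSpace_fin
          omega
      set m := Fintype.card ι with hm
      set e := Fintype.equivFin ι with he
      have key : ∀ (M : Type) (_ : AddCommMonoid M) (g : ι → M),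
          (∑ j : Fin 4, if h : (j : ℕ) < m then g (e.symm ⟨(j : ℕ), h⟩) else 0) = ∑ i, g i := by
        intro M _ g
        rw [Fin.sum_univ_eq_sum_range (fun j => if h : j < m then g (e.symm ⟨j, h⟩) else 0) 4]
        rw [← Finset.sum_subset (Finset.range_subset_range.mpr hcard)
          (by intro j _ hj; rw [Finset.mem_range] at hj; rw [dif_neg hj])]
        rw [← Fin.sum_univ_eq_sum_range (fun j => if h : j < m then g (e.symm ⟨j, h⟩) else 0) m]
        rw [← Equiv.sum_comp e.symm g]
        apply Finset.sum_congr rfl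
        intro j _
        rw [dif_pos j.isLt]
      refine ⟨(fun j => if h : (j : ℕ) < m then w (e.symm ⟨(j : ℕ), h⟩) else 0,
        fun j => if h : (j : ℕ) < m then z (e.symm ⟨(j : ℕ), h⟩) else 0), ⟨⟨?_, ?_⟩, ?_⟩, ?_⟩
      · intro j
        dsimp only
        by_cases h : (j : ℕ) < m
        · rw [dif_pos h]; exact (hwpos _).le
        · rw [dif_neg h]
      · exact (key ℝ _ w).trans hw1'
      · intro j _
        dsimp only
        by_cases h : (j : ℕ) < m
        · rw [dif_pos h]; exact hzs ⟨_, rfl⟩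
        · rw [dif_neg h]; exact h0
      · rw [hT]
        dsimp only
        rw [← hsum', ← key E3 _ (fun i => w i • z i)]
        apply Finset.sum_congr rfl
        intro j _
        by_cases h : (j : ℕ) < m
        · rw [dif_pos h, dif_pos h, dif_pos h]
        · rw [dif_neg h, dif_neg h, dif_neg h, zero_smul]
    · rintro x ⟨⟨ww, zz⟩, ⟨hww, hzz⟩, rfl⟩
      exact (convex_convexHull ℝ s).sum_mem (fun i _ => hww.1 i) hww.2
        (fun i _ => subset_convexHull ℝ s (hzz i (Set.mem_univ i)))
  rw [himg]
  exact hK.image hTc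

lemma coe_toIcoMod' {p : ℝ} (hp : 0 < p) (a s : ℝ) :
    ((toIcoMod hp a s : ℝ) : AddCircle p) = (s : AddCircle p) := by
  have h2 : ((toIcoMod hp a s - s : ℝ) : AddCircle p) = 0 :=
    (AddCircle.coe_eq_zero_iff p).mpr ⟨-(toIcoDiv hp a s), (toIcoMod_sub_self hp a s).symm⟩
  rw [AddCircle.coe_sub] at h2
  exact sub_eq_zero.mp h2

/-- A minimal inspection curve passes through the origin at only finitely
many times. -/
theorem minimal_inspection_finite_zeros
    (L : ℝ) (γ : AddCircle L → E3) (hγ : IsMinInspectionCurve L γ) :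
    {t : AddCircle L | γ t = 0}.Finite := by
  by_contra hfin
  have hinf : {t : AddCircle L | γ t = 0}.Infinite := hfin
  obtain ⟨⟨hL, hcont, hlip, hvar, hsphere⟩, hmin⟩ := hγ
  haveI : Fact (0 < L) := ⟨hL⟩
  set γt := liftCurve L γ with hγt
  have hper : ∀ s : ℝ, γt (s + L) = γt s := by
    intro s
    show γ _ = γ _
    rw [AddCircle.coe_add_period]
  -- the set of real zero times in `[0, L)` is infinite
  have hZ : {s : ℝ | s ∈ Ico (0:ℝ) L ∧ γt s = 0}.Infinite := by
    have hinj : Set.InjOn (fun t : AddCircle L => ((AddCircle.equivIco L 0 t : Ico (0:ℝ) (0 + L)) : ℝ))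
        {t : AddCircle L | γ t = 0} := by
      intro a _ b _ h
      exact (AddCircle.equivIco L 0).injective (Subtype.ext h)
    refine ((hinf.image hinj).mono ?_)
    rintro _ ⟨t, ht, rfl⟩
    obtain ⟨hm1, hm2⟩ := (AddCircle.equivIco L 0 t).2
    have hmem : ((AddCircle.equivIco L 0 t : Ico (0:ℝ) (0 + L)) : ℝ) ∈ Ico (0:ℝ) L :=
      ⟨hm1, by linarith⟩
    have hcoe : (((AddCircle.equivIco L 0 t : Ico (0:ℝ) (0 + L)) : ℝ) : AddCircle L) = t :=
      (AddCircle.equivIco L 0).symm_apply_apply t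
    have hval : γt (((AddCircle.equivIco L 0 t : Ico (0:ℝ) (0 + L)) : ℝ)) = γ t := congrArg γ hcoe
    exact ⟨hmem, hval.trans ht⟩
  -- two distinct zeros at distance `< 1`
  have hkey : ∃ s₁ s₂ : ℝ, (s₁ ∈ Ico (0:ℝ) L ∧ γt s₁ = 0) ∧ (s₂ ∈ Ico (0:ℝ) L ∧ γt s₂ = 0) ∧
      s₁ < s₂ ∧ s₂ - s₁ < 1 := by
    set Z := {s : ℝ | s ∈ Ico (0:ℝ) L ∧ γt s = 0} with hZdef
    haveI hZinf : Infinite Z := Set.infinite_coe_iff.mpr hZ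
    set N := ⌈2 * L⌉₊ + 1 with hN
    have hmap : ∀ s : Z, ⌊2 * (s:ℝ)⌋₊ < N := by
      rintro ⟨s, hs⟩
      simp only
      have h1 : ⌊2 * s⌋₊ ≤ ⌈2 * L⌉₊ :=
        le_trans (Nat.floor_le_floor (by linarith [hs.1.2])) (Nat.floor_le_ceil _)
      omega
    obtain ⟨b, hb⟩ := Finite.exists_infinite_fiber (fun s : Z => (⟨⌊2 * (s:ℝ)⌋₊, hmap s⟩ : Fin N))
    haveI := hb
    obtain ⟨x, y, hxy⟩ :=
      exists_pair_ne ((fun s : Z => (⟨⌊2 * (s:ℝ)⌋₊, hmap s⟩ : Fin N)) ⁻¹' {b})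
    have hxf : ⌊2 * ((x : Z) : ℝ)⌋₊ = (b : ℕ) := congrArg Fin.val x.2
    have hyf : ⌊2 * ((y : Z) : ℝ)⌋₊ = (b : ℕ) := congrArg Fin.val y.2
    have hxZ := (x : Z).2
    have hyZ := (y : Z).2
    have hne : ((x : Z) : ℝ) ≠ ((y : Z) : ℝ) := by
      intro h
      exact hxy (Subtype.ext (Subtype.ext h))
    have hx0 : (0:ℝ) ≤ 2 * ((x : Z) : ℝ) := by linarith [hxZ.1.1]
    have hy0 : (0:ℝ) ≤ 2 * ((y : Z) : ℝ) := by linarith [hyZ.1.1]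
    have hxlb := Nat.floor_le hx0
    have hxub := Nat.lt_floor_add_one (2 * ((x : Z) : ℝ))
    have hylb := Nat.floor_le hy0
    have hyub := Nat.lt_floor_add_one (2 * ((y : Z) : ℝ))
    rw [hxf] at hxlb hxub
    rw [hyf] at hylb hyub
    rcases lt_or_gt_of_ne hne with h | h
    · exact ⟨_, _, hxZ, hyZ, h, by linarith⟩
    · exact ⟨_, _, hyZ, hxZ, h, by linarith⟩
  obtain ⟨s₁, s₂, hs₁, hs₂, hlt, hdiff⟩ := hkey
  set d := s₂ - s₁ with hd
  have hd0 : 0 < d := by rw [hd]; linarith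
  have hd1 : d < 1 := hdiff
  have hs₁0 : (0:ℝ) ≤ s₁ := hs₁.1.1
  have hs₂L : s₂ < L := hs₂.1.2
  set L' := L - d with hL'def
  have hL' : 0 < L' := by rw [hL'def, hd]; linarith
  haveI : Fact (0 < L') := ⟨hL'⟩
  set F : ℝ → E3 := fun u => γt (s₂ + u) with hF
  have hs2L' : s₂ + L' = s₁ + L := by rw [hL'def, hd]; ring
  have hF0 : F 0 = 0 := by simp only [hF, add_zero]; exact hs₂.2
  have hFL' : F L' = 0 := by
    simp only [hF]
    rw [hs2L', hper s₁]
    exact hs₁.2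
  set γ' := AddCircle.liftIco L' 0 F with hγ'def
  set g := liftCurve L' γ' with hg
  have hgval : ∀ s : ℝ, g s = F (toIcoMod hL' 0 s) := by
    intro s
    have h1 : g s = γ' ((s : ℝ) : AddCircle L') := rfl
    rw [h1, ← coe_toIcoMod' hL' 0 s, hγ'def]
    exact AddCircle.liftIco_coe_apply (toIcoMod_mem_Ico hL' 0 s)
  have hgIcc : ∀ u ∈ Icc (0:ℝ) L', g u = F u := by
    intro u hu
    rcases eq_or_lt_of_le hu.2 with h | h
    · rw [hgval, h]
      have h2 : toIcoMod hL' 0 L' = 0 := by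
        have h3 : toIcoMod hL' 0 (0 + L') = toIcoMod hL' 0 0 := toIcoMod_add_right hL' 0 0
        rw [zero_add] at h3
        rw [h3]
        exact (toIcoMod_eq_self hL').mpr ⟨le_rfl, by linarith⟩
      rw [h2, hF0, hFL']
    · rw [hgval, (toIcoMod_eq_self hL').mpr ⟨hu.1, by rw [zero_add]; exact h⟩]
  have hglipOn : LipschitzOnWith 1 g (Icc (0:ℝ) L') := by
    apply LipschitzOnWith.of_dist_le_mul
    intro x hx y hy
    rw [hgIcc x hx, hgIcc y hy]
    simp only [hF]
    have h1 := hlip.dist_le_mul (s₂ + x) (s₂ + y)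
    rw [NNReal.coe_one, one_mul] at h1 ⊢
    refine h1.trans (le_of_eq ?_)
    rw [Real.dist_eq, Real.dist_eq]
    congr 1
    ring
  have hgper : ∀ s : ℝ, g (s + L') = g s := by
    intro s
    rw [hgval, hgval, toIcoMod_add_right]
  have hglip : LipschitzWith 1 g := lipschitzWith_of_periodic' hL' hgper hglipOn
  have hγ'cont : Continuous γ' := by
    rw [hγ'def]
    apply AddCircle.liftIco_continuous
    · rw [zero_add, hF0, hFL']
    · simp only [hF]
      exact (hlip.continuous.comp (continuous_const.add continuous_id)).continuousOn
  -- variation bookkeeping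
  have Vle : ∀ a b : ℝ, a ≤ b → eVariationOn γt (Icc a b) ≤ ENNReal.ofReal (b - a) := by
    intro a b hab
    have h1 : eVariationOn γt (Icc a b) ≤ 1 * eVariationOn (id : ℝ → ℝ) (Icc a b) := by
      have h2 := (hlip.lipschitzOnWith (s := Set.univ)).comp_eVariationOn_le
        (Set.mapsTo_univ (id : ℝ → ℝ) (Icc a b))
      simpa using h2
    have h3 : eVariationOn (id : ℝ → ℝ) (Icc a b) ≤ ENNReal.ofReal (b - a) := by
      have h4 := (monotoneOn_id (s := Icc a b)).eVariationOn_le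
        (left_mem_Icc.mpr hab) (right_mem_Icc.mpr hab)
      simpa using h4
    calc eVariationOn γt (Icc a b) ≤ 1 * eVariationOn (id : ℝ → ℝ) (Icc a b) := h1
      _ = eVariationOn (id : ℝ → ℝ) (Icc a b) := one_mul _
      _ ≤ ENNReal.ofReal (b - a) := h3
  have Vadd : ∀ a b c : ℝ, a ≤ b → b ≤ c →
      eVariationOn γt (Icc a b) + eVariationOn γt (Icc b c) = eVariationOn γt (Icc a c) := by
    intro a b c hab hbc
    have h1 := eVariationOn.Icc_add_Icc γt (s := (Set.univ : Set ℝ)) hab hbc (Set.mem_univ b)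
    simpa [Set.univ_inter] using h1
  have Vshift : eVariationOn γt (Icc (0:ℝ) s₁) = eVariationOn γt (Icc L (s₁ + L)) := by
    have h1 : γt ∘ (fun u : ℝ => u + L) = γt := funext hper
    have h2 := eVariationOn.comp_eq_of_monotoneOn γt (fun u : ℝ => u + L)
      (fun x _ y _ hxy => by simpa using hxy : MonotoneOn (fun u : ℝ => u + L) (Icc (0:ℝ) s₁))
    rw [h1] at h2
    rw [h2, image_add_const_Icc, zero_add]
  have hsum : eVariationOn γt (Icc (0:ℝ) s₁) + eVariationOn γt (Icc s₁ s₂) +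
      eVariationOn γt (Icc s₂ L) = ENNReal.ofReal L := by
    rw [Vadd 0 s₁ s₂ hs₁0 hlt.le, Vadd 0 s₂ L (by linarith) hs₂L.le]
    exact hvar
  have hofL : ENNReal.ofReal L = ENNReal.ofReal (s₁ - 0) + ENNReal.ofReal (s₂ - s₁) +
      ENNReal.ofReal (L - s₂) := by
    rw [← ENNReal.ofReal_add (by linarith) (by linarith),
      ← ENNReal.ofReal_add (by linarith) (by linarith)]
    congr 1
    ring
  obtain ⟨hV1, hV3⟩ := sum3_eq' ENNReal.ofReal_ne_top ENNReal.ofReal_ne_top ENNReal.ofReal_ne_top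
    (Vle 0 s₁ hs₁0) (Vle s₁ s₂ hlt.le) (Vle s₂ L hs₂L.le) (hsum.trans hofL)
  have hvar' : eVariationOn g (Icc (0:ℝ) L') = ENNReal.ofReal L' := by
    have e1 : eVariationOn g (Icc (0:ℝ) L') = eVariationOn (γt ∘ fun u : ℝ => s₂ + u) (Icc (0:ℝ) L') :=
      eVariationOn.eq_of_eqOn (fun u hu => by rw [hgIcc u hu]; simp only [hF]; rfl)
    rw [e1, eVariationOn.comp_eq_of_monotoneOn γt (fun u : ℝ => s₂ + u)
      (fun x _ y _ hxy => by simpa using hxy : MonotoneOn (fun u : ℝ => s₂ + u) (Icc (0:ℝ) L')),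
      image_const_add_Icc, add_zero, hs2L',
      ← Vadd s₂ L (s₁ + L) hs₂L.le (by linarith), hV3, ← Vshift, hV1,
      ← ENNReal.ofReal_add (by linarith) (by linarith)]
    congr 1
    rw [hL'def, hd]
    ring
  -- range computations
  have hrangeγ' : Set.range γ' = γt '' Icc s₂ (s₁ + L) := by
    apply Set.Subset.antisymm
    · rintro _ ⟨t, rfl⟩
      induction t using QuotientAddGroup.induction_on with
      | H s =>
        have h1 : γ' ((s : ℝ) : AddCircle L') = g s := rfl
        rw [h1, hgval]
        have hr := toIcoMod_mem_Ico' hL' s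
        refine ⟨s₂ + toIcoMod hL' 0 s, ⟨by linarith [hr.1], by linarith [hr.2, hs2L']⟩, ?_⟩
        simp only [hF]
    · rintro _ ⟨u, hu, rfl⟩
      have hu' : u - s₂ ∈ Icc (0:ℝ) L' := ⟨by linarith [hu.1], by linarith [hu.2, hs2L']⟩
      refine ⟨((u - s₂ : ℝ) : AddCircle L'), ?_⟩
      have h1 : γ' ((u - s₂ : ℝ) : AddCircle L') = g (u - s₂) := rfl
      rw [h1, hgIcc _ hu']
      simp only [hF]
      congr 1
      ring
  have hrangeγ : Set.range γ = γt '' Icc s₁ s₂ ∪ γt '' Icc s₂ (s₁ + L) := by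
    rw [← Set.image_union, Set.Icc_union_Icc_eq_Icc hlt.le (by linarith)]
    apply Set.Subset.antisymm
    · rintro _ ⟨t, rfl⟩
      induction t using QuotientAddGroup.induction_on with
      | H s =>
        have hr := toIcoMod_mem_Ico hL s₁ s
        refine ⟨toIcoMod hL s₁ s, ⟨hr.1, hr.2.le⟩, ?_⟩
        show γ _ = γ _
        rw [coe_toIcoMod' hL s₁ s]
    · rintro _ ⟨u, _, rfl⟩
      exact ⟨((u : ℝ) : AddCircle L), rfl⟩
  -- convex hull argument
  set A := γt '' Icc s₁ s₂ with hA
  set B := γt '' Icc s₂ (s₁ + L) with hB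
  have hAnorm : ∀ x ∈ A, ‖x‖ ≤ d := by
    rintro _ ⟨u, hu, rfl⟩
    have h1 := hlip.dist_le_mul u s₁
    rw [NNReal.coe_one, one_mul] at h1
    have h2 : γt s₁ = 0 := hs₁.2
    rw [h2, dist_zero_right] at h1
    have h3 : dist u s₁ = u - s₁ := by
      rw [Real.dist_eq, abs_of_nonneg (by linarith [hu.1])]
    rw [h3] at h1
    have := hu.2
    rw [hd]
    linarith
  have h0B : (0 : E3) ∈ B := ⟨s₂, ⟨le_rfl, by linarith⟩, hs₂.2⟩
  have hBcl : IsClosed (convexHull ℝ B) := by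
    have hBcp : IsCompact B := isCompact_Icc.image hlip.continuous
    exact (isCompact_convexHull_E3 hBcp h0B).isClosed
  have hsphereB : Metric.sphere (0 : E3) 1 ⊆ convexHull ℝ B := by
    intro x hx
    by_contra hxB
    obtain ⟨f, u, hfu, hux⟩ :=
      geometric_hahn_banach_closed_point (convex_convexHull ℝ B) hBcl hxB
    set v := (InnerProductSpace.toDual ℝ E3).symm f with hv
    have hfv : ∀ y : E3, f y = (inner ℝ v y : ℝ) := fun y =>
      (InnerProductSpace.toDual_symm_apply).symm
    have hxnorm : ‖x‖ = 1 := mem_sphere_zero_iff_norm.mp hx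
    have hu0 : 0 < u := by
      have h1 := hfu 0 (subset_convexHull ℝ B h0B)
      rwa [map_zero] at h1
    have hfx : f x ≤ ‖v‖ := by
      rw [hfv]
      calc (inner ℝ v x : ℝ) ≤ ‖v‖ * ‖x‖ := real_inner_le_norm v x
        _ = ‖v‖ := by rw [hxnorm, mul_one]
    have hvpos : 0 < ‖v‖ := lt_of_lt_of_le (hu0.trans hux) hfx
    set y := ‖v‖⁻¹ • v with hy
    have hynorm : ‖y‖ = 1 := by
      rw [hy, norm_smul, norm_inv, norm_norm, inv_mul_cancel₀ hvpos.ne']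
    have hymem : y ∈ convexHull ℝ (A ∪ B) := by
      rw [← hrangeγ]
      exact hsphere (mem_sphere_zero_iff_norm.mpr hynorm)
    have hhalf : convexHull ℝ (A ∪ B) ⊆ {z : E3 | f z ≤ max (‖v‖ * d) u} := by
      apply convexHull_min
      · rintro z (hz | hz)
        · have h1 : f z ≤ ‖v‖ * d := by
            rw [hfv]
            calc (inner ℝ v z : ℝ) ≤ ‖v‖ * ‖z‖ := real_inner_le_norm v z
              _ ≤ ‖v‖ * d := by
                have := hAnorm z hz
                gcongr
          exact h1.trans (le_max_left _ _)
        · exact (hfu z (subset_convexHull ℝ B hz)).le.trans (le_max_right _ _)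
      · exact convex_halfSpace_le ⟨fun a b => map_add f a b, fun c a => map_smul f c a⟩ _
    have hfy : f y = ‖v‖ := by
      rw [hfv, hy, real_inner_smul_right, real_inner_self_eq_norm_sq]
      field_simp
    have hle := hhalf hymem
    rw [Set.mem_setOf_eq, hfy] at hle
    have hc1 : ‖v‖ * d < ‖v‖ := by nlinarith
    have hc2 : u < ‖v‖ := lt_of_lt_of_le hux hfx
    rcases le_max_iff.mp hle with h | h
    · linarith
    · linarith
  -- assemble the competitor inspection curve and contradict minimality
  have hins : IsInspectionCurve L' γ' := by
    refine ⟨hL', hγ'cont, ?_, ?_, ?_⟩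
    · show LipschitzWith 1 (liftCurve L' γ')
      rw [← hg]
      exact hglip
    · show eVariationOn (liftCurve L' γ') (Set.Icc 0 L') = ENNReal.ofReal L'
      rw [← hg]
      exact hvar'
    · rw [hrangeγ']
      exact hsphereB
  have hfinal := hmin L' γ' hins
  rw [hL'def] at hfinal
  linarith
end
end
end

section
/- Let γ: ℝ/L → ℝ³ be a closed rectifiable curve, parameterized with constant unit speed, whose convex hull contains the unit sphere S² centered at the origin. Then the horizon satisfies H(γ) ≥ 8π. -/
open Real Set MeasureTheory ENNReal

noncomputable section


noncomputable section

/-- The horizon of a closed curve `γ : ℝ/L → ℝ³`: the measure in `S²`, counted with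
multiplicity, of the set of points `p ∈ S²` whose tangent plane
`T_p S² = {x : ⟨x,p⟩ = 1}` meets `γ`; here `#γ⁻¹(T_p S²)` is realized by counting
parameters in one period `[0, L)`, and the measure on the unit sphere is the
two-dimensional Hausdorff measure (of total mass `4π`). -/
def horizonCurve (L : ℝ) (γ : AddCircle L → E3) : ℝ≥0∞ :=
  ∫⁻ p in Metric.sphere (0 : E3) 1,
    (({t ∈ Set.Ico (0:ℝ) L | inner ℝ (liftCurve L γ t) p = (1:ℝ)}).encard : ℝ≥0∞) ∂μH[2]

/-- band parametrization of the unit sphere -/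
def sp (θ z : ℝ) : E3 :=
  (WithLp.equiv 2 (Fin 3 → ℝ)).symm
    ![Real.sqrt (1 - z^2) * Real.cos θ, Real.sqrt (1 - z^2) * Real.sin θ, z]

lemma sp_apply_zero (θ z : ℝ) : sp θ z 0 = Real.sqrt (1 - z^2) * Real.cos θ := rfl
lemma sp_apply_one (θ z : ℝ) : sp θ z 1 = Real.sqrt (1 - z^2) * Real.sin θ := rfl
lemma sp_apply_two (θ z : ℝ) : sp θ z 2 = z := rfl

lemma sp_mem_sphere (θ z : ℝ) (hz : z^2 ≤ 1) : sp θ z ∈ Metric.sphere (0:E3) 1 := by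
  rw [mem_sphere_zero_iff_norm, EuclideanSpace.norm_eq]
  rw [Fin.sum_univ_three]
  rw [sp_apply_zero, sp_apply_one, sp_apply_two]
  have h1 : Real.sqrt (1 - z^2) ^ 2 = 1 - z^2 := Real.sq_sqrt (by linarith)
  have h2 : Real.cos θ ^ 2 + Real.sin θ ^ 2 = 1 := Real.cos_sq_add_sin_sq θ
  have : ‖Real.sqrt (1 - z^2) * Real.cos θ‖ ^ 2 + ‖Real.sqrt (1 - z^2) * Real.sin θ‖ ^ 2
      + ‖z‖ ^ 2 = 1 := by
    simp only [Real.norm_eq_abs, sq_abs]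
    nlinarith [h1, h2]
  rw [this, Real.sqrt_one]

lemma dist_sp_sq (θ₁ z₁ θ₂ z₂ : ℝ) :
    dist (sp θ₁ z₁) (sp θ₂ z₂) ^ 2
      = (Real.sqrt (1 - z₁^2) - Real.sqrt (1 - z₂^2))^2
        + 2 * Real.sqrt (1 - z₁^2) * Real.sqrt (1 - z₂^2) * (1 - Real.cos (θ₁ - θ₂))
        + (z₁ - z₂)^2 := by
  rw [EuclideanSpace.dist_eq, Real.sq_sqrt (by positivity)]
  rw [Fin.sum_univ_three]
  simp only [sp_apply_zero, sp_apply_one, sp_apply_two, Real.dist_eq, sq_abs]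
  have e1 : Real.cos θ₁ ^ 2 + Real.sin θ₁ ^ 2 = 1 := Real.cos_sq_add_sin_sq θ₁
  have e2 : Real.cos θ₂ ^ 2 + Real.sin θ₂ ^ 2 = 1 := Real.cos_sq_add_sin_sq θ₂
  have e3 : Real.cos (θ₁ - θ₂) = Real.cos θ₁ * Real.cos θ₂ + Real.sin θ₁ * Real.sin θ₂ :=
    Real.cos_sub θ₁ θ₂
  set R₁ := Real.sqrt (1 - z₁^2)
  set R₂ := Real.sqrt (1 - z₂^2)
  linear_combination (R₁^2) * e1 + (R₂^2) * e2 + 2*R₁*R₂*e3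

lemma two_sub_cos {x δ : ℝ} (hx : |x| ≤ δ) (hδ : δ ≤ 1) :
    x^2 * (1 - 5*δ^2/48) ≤ 2 * (1 - Real.cos x) := by
  have hx1 : |x| ≤ 1 := hx.trans hδ
  have hb := Real.cos_bound hx1
  have h1 : Real.cos x - (1 - x^2/2) ≤ |x|^4 * (5/96) := (abs_le.mp hb).2
  have h4 : |x|^4 = (x^2)^2 := by
    rw [show (4:ℕ) = 2*2 from rfl, pow_mul, sq_abs]
  have hx2 : x^2 ≤ δ^2 := by
    have := abs_nonneg x
    nlinarith [sq_abs x]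
  nlinarith [h1, hx2, sq_nonneg x, h4]

lemma vert_bound {ζ z₁ z₂ : ℝ} (h0 : 0 ≤ ζ) (h₁ : ζ ≤ z₁) (h₂ : ζ ≤ z₂)
    (hz₁ : z₁^2 ≤ 1) (hz₂ : z₂^2 ≤ 1) (hζ : ζ^2 < 1) :
    (z₁ - z₂)^2 / (1 - ζ^2)
      ≤ (Real.sqrt (1 - z₁^2) - Real.sqrt (1 - z₂^2))^2 + (z₁ - z₂)^2 := by
  set R₁ := Real.sqrt (1 - z₁^2) with hR₁
  set R₂ := Real.sqrt (1 - z₂^2) with hR₂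
  have hs₁ : R₁^2 = 1 - z₁^2 := Real.sq_sqrt (by linarith)
  have hs₂ : R₂^2 = 1 - z₂^2 := Real.sq_sqrt (by linarith)
  have hpos : (0:ℝ) < 1 - ζ^2 := by linarith
  rw [div_le_iff₀ hpos]
  have key : (R₁ - R₂) * (R₁ + R₂) = z₂^2 - z₁^2 := by
    have : R₁^2 - R₂^2 = z₂^2 - z₁^2 := by rw [hs₁, hs₂]; ring
    linarith [this, sq_nonneg (R₁ - R₂)]
  have hsum : (R₁ + R₂)^2 ≤ 4 * (1 - ζ^2) := by nlinarith [sq_nonneg (R₁ - R₂)]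
  have hzz : 4*ζ^2 ≤ (z₁+z₂)^2 := by nlinarith
  have k2 : (R₁-R₂)^2 * (R₁+R₂)^2 = (z₁-z₂)^2 * (z₁+z₂)^2 := by
    rw [← mul_pow, key]; ring
  have A : (R₁-R₂)^2 * (R₁+R₂)^2 ≤ (R₁-R₂)^2 * (4*(1-ζ^2)) :=
    mul_le_mul_of_nonneg_left hsum (sq_nonneg _)
  have B : (z₁-z₂)^2 * (4*ζ^2) ≤ (z₁-z₂)^2 * (z₁+z₂)^2 :=
    mul_le_mul_of_nonneg_left hzz (sq_nonneg _)
  nlinarith [A, B, k2]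

def Fb (r : ℝ) : ℝ × ℝ → E3 := fun p => sp (p.1 / r) (r * p.2)

lemma continuous_Fb (r : ℝ) : Continuous (Fb r) := by
  unfold Fb sp
  apply Continuous.comp
  · exact (PiLp.continuous_toLp 2 (fun _ : Fin 3 => ℝ))
  · apply continuous_pi
    intro i
    fin_cases i <;> simp <;> fun_prop

lemma sp_inj {θ θ' z z' : ℝ} (hz : z^2 < 1) (hθ : |θ - θ'| < 2*π)
    (h : sp θ z = sp θ' z') : θ = θ' ∧ z = z' := by
  have h2 : z = z' := by
    have := congrArg (fun v : E3 => v 2) h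
    simpa [sp_apply_two] using this
  subst h2
  have hr : (0:ℝ) < Real.sqrt (1 - z^2) := Real.sqrt_pos.2 (by linarith)
  have h0 : Real.cos θ = Real.cos θ' := by
    have := congrArg (fun v : E3 => v 0) h
    rw [sp_apply_zero, sp_apply_zero] at this
    exact mul_left_cancel₀ (ne_of_gt hr) this
  have h1 : Real.sin θ = Real.sin θ' := by
    have := congrArg (fun v : E3 => v 1) h
    rw [sp_apply_one, sp_apply_one] at this
    exact mul_left_cancel₀ (ne_of_gt hr) this
  have hcos1 : Real.cos (θ - θ') = 1 := by
    rw [Real.cos_sub, h0, h1]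
    rw [← Real.cos_sq_add_sin_sq θ']
    ring
  have := (Real.cos_eq_one_iff_of_lt_of_lt (by cases abs_lt.mp hθ; linarith)
    (by cases abs_lt.mp hθ; linarith)).1 hcos1
  exact ⟨by linarith, rfl⟩

set_option maxHeartbeats 2000000 in
lemma piece_bound {z₁ z₂ u₁ u₂ δ κ : ℝ}
    (h0 : 0 ≤ z₁) (h12 : z₁ < z₂) (h21 : z₂ < 1)
    (hδ0 : 0 < δ) (hδ1 : δ ≤ 1) (hu : u₁ < u₂)
    (huw : u₂ - u₁ ≤ Real.sqrt (1 - z₁^2) * δ)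
    (hκ1 : 1 ≤ κ)
    (hκ : 1 - z₁^2 ≤ κ * ((1 - z₂^2) * (1 - 5*δ^2/48))) :
    MeasurableSet (Fb (Real.sqrt (1 - z₁^2)) ''
        (Set.Ico u₁ u₂ ×ˢ Set.Ioc (z₁ / Real.sqrt (1 - z₁^2)) (z₂ / Real.sqrt (1 - z₁^2)))) ∧
    ENNReal.ofReal ((u₂ - u₁) * ((z₂ - z₁) / Real.sqrt (1 - z₁^2)))
      ≤ ENNReal.ofReal κ * μH[2] (Fb (Real.sqrt (1 - z₁^2)) ''
        (Set.Ico u₁ u₂ ×ˢ Set.Ioc (z₁ / Real.sqrt (1 - z₁^2)) (z₂ / Real.sqrt (1 - z₁^2)))) := by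
  have hz₁1 : z₁^2 < 1 := by nlinarith
  set r := Real.sqrt (1 - z₁^2) with hrdef
  have hr2 : r^2 = 1 - z₁^2 := Real.sq_sqrt (by linarith)
  have hrpos : 0 < r := Real.sqrt_pos.2 (by linarith)
  have hκ0 : (0:ℝ) ≤ κ := by linarith
  set a := z₁ / r with hadef
  set b := z₂ / r with hbdef
  set D := Set.Ico u₁ u₂ ×ˢ Set.Ioc a b with hDdef
  set T := Set.Icc u₁ u₂ ×ˢ Set.Icc a b with hTdef
  have hDT : D ⊆ T := Set.prod_mono Set.Ico_subset_Icc_self Set.Ioc_subset_Icc_self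
  have hzmem : ∀ v ∈ Set.Icc a b, z₁ ≤ r * v ∧ r * v ≤ z₂ := by
    intro v hv
    constructor
    · rw [mul_comm]; exact (div_le_iff₀ hrpos).1 hv.1
    · rw [mul_comm]; exact (le_div_iff₀ hrpos).1 hv.2
  -- the distance lower bound
  have dist_bound : ∀ p ∈ T, ∀ q ∈ T,
      dist p q ≤ Real.sqrt κ * dist (Fb r p) (Fb r q) := by
    rintro ⟨u, v⟩ hp ⟨u', v'⟩ hq
    rw [Set.mem_prod] at hp hq
    obtain ⟨hpu, hpv⟩ := hp
    obtain ⟨hqu, hqv⟩ := hq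
    have hzp := hzmem v hpv
    have hzq := hzmem v' hqv
    have hzp2 : (r*v)^2 ≤ 1 := by nlinarith [hzp.1, hzp.2]
    have hzq2 : (r*v')^2 ≤ 1 := by nlinarith [hzq.1, hzq.2]
    set ch := dist (Fb r (u, v)) (Fb r (u', v')) with hchdef
    have hch : ch^2 = (Real.sqrt (1 - (r*v)^2) - Real.sqrt (1 - (r*v')^2))^2
        + 2 * Real.sqrt (1 - (r*v)^2) * Real.sqrt (1 - (r*v')^2)
          * (1 - Real.cos (u/r - u'/r))
        + (r*v - r*v')^2 := dist_sp_sq (u/r) (r*v) (u'/r) (r*v')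
    set Rp := Real.sqrt (1 - (r*v)^2) with hRpdef
    set Rq := Real.sqrt (1 - (r*v')^2) with hRqdef
    have hq1 : (r*v)^2 ≤ z₂^2 := by nlinarith [hzp.1, hzp.2, h0]
    have hq2 : (r*v')^2 ≤ z₂^2 := by nlinarith [hzq.1, hzq.2, h0]
    have hRp_ge : Real.sqrt (1 - z₂^2) ≤ Rp := Real.sqrt_le_sqrt (by linarith)
    have hRq_ge : Real.sqrt (1 - z₂^2) ≤ Rq := Real.sqrt_le_sqrt (by linarith)
    have hsm : Real.sqrt (1 - z₂^2)^2 = 1 - z₂^2 := Real.sq_sqrt (by nlinarith)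
    have hsm_nn : (0:ℝ) ≤ Real.sqrt (1 - z₂^2) := Real.sqrt_nonneg _
    have hz22 : (0:ℝ) ≤ 1 - z₂^2 := by nlinarith
    have hprod : 1 - z₂^2 ≤ Rp * Rq := by
      calc 1 - z₂^2 = Real.sqrt (1 - z₂^2) * Real.sqrt (1 - z₂^2) := by
            rw [← sq]; exact hsm.symm
      _ ≤ Rp * Rq := mul_le_mul hRp_ge hRq_ge hsm_nn (le_trans hsm_nn hRp_ge)
    -- angular estimate
    have hΔθ : |u/r - u'/r| ≤ δ := by
      have h1 : |u - u'| ≤ u₂ - u₁ := by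
        rw [abs_le]
        constructor <;> [linarith [hpu.1, hqu.2]; linarith [hpu.2, hqu.1]]
      have h2 : |u/r - u'/r| = |u - u'| / r := by
        rw [div_sub_div_same, abs_div, abs_of_pos hrpos]
      rw [h2, div_le_iff₀ hrpos]
      calc |u - u'| ≤ u₂ - u₁ := h1
      _ ≤ r * δ := huw
      _ = δ * r := mul_comm _ _
    have hcos := two_sub_cos hΔθ hδ1
    have hcos_nn : (0:ℝ) ≤ 1 - Real.cos (u/r - u'/r) := by
      linarith [Real.cos_le_one (u/r - u'/r)]
    -- (i) horizontal bound
    have hui : (u - u')^2 ≤ κ * ch^2 := by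
      have e1 : (u - u')^2 = (u/r - u'/r)^2 * r^2 := by
        field_simp
      have e2a : (1 - z₂^2) * ((u/r - u'/r)^2 * (1 - 5*δ^2/48))
          ≤ (1 - z₂^2) * (2 * (1 - Real.cos (u/r - u'/r))) :=
        mul_le_mul_of_nonneg_left hcos hz22
      have e2b : (1 - z₂^2) * (2 * (1 - Real.cos (u/r - u'/r)))
          ≤ (Rp * Rq) * (2 * (1 - Real.cos (u/r - u'/r))) :=
        mul_le_mul_of_nonneg_right hprod (by linarith)
      have e2 : (1 - z₂^2) * ((u/r - u'/r)^2 * (1 - 5*δ^2/48))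
          ≤ 2 * Rp * Rq * (1 - Real.cos (u/r - u'/r)) := by
        calc (1 - z₂^2) * ((u/r - u'/r)^2 * (1 - 5*δ^2/48))
            ≤ (Rp * Rq) * (2 * (1 - Real.cos (u/r - u'/r))) := le_trans e2a e2b
        _ = 2 * Rp * Rq * (1 - Real.cos (u/r - u'/r)) := by ring
      have e3 : (1 - z₂^2) * ((u/r - u'/r)^2 * (1 - 5*δ^2/48)) ≤ ch^2 := by
        rw [hch]; linarith [sq_nonneg (Rp - Rq), sq_nonneg (r*v - r*v')]
      calc (u - u')^2 = (u/r - u'/r)^2 * (1 - z₁^2) := by rw [e1, hr2]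
      _ ≤ (u/r - u'/r)^2 * (κ * ((1 - z₂^2) * (1 - 5*δ^2/48))) :=
          mul_le_mul_of_nonneg_left hκ (sq_nonneg _)
      _ = κ * ((1 - z₂^2) * ((u/r - u'/r)^2 * (1 - 5*δ^2/48))) := by ring
      _ ≤ κ * ch^2 := mul_le_mul_of_nonneg_left e3 hκ0
    -- (ii) vertical bound
    have hvi : (v - v')^2 ≤ κ * ch^2 := by
      have hvb := vert_bound (ζ := z₁) (z₁ := r*v) (z₂ := r*v') h0 hzp.1 hzq.1 hzp2 hzq2 hz₁1
      have e4 : (r*v - r*v')^2 / (1 - z₁^2) = (v - v')^2 := by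
        rw [← hr2]
        field_simp
      have hBnn : (0:ℝ) ≤ 2 * Rp * Rq * (1 - Real.cos (u/r - u'/r)) :=
        mul_nonneg (mul_nonneg (mul_nonneg (by norm_num) (Real.sqrt_nonneg _))
          (Real.sqrt_nonneg _)) hcos_nn
      have hch_ge : (v-v')^2 ≤ ch^2 := by
        rw [← e4, hch]
        linarith [hvb, hBnn]
      calc (v - v')^2 ≤ ch^2 := hch_ge
      _ = 1 * ch^2 := (one_mul _).symm
      _ ≤ κ * ch^2 := mul_le_mul_of_nonneg_right hκ1 (sq_nonneg _)
    -- combine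
    have hch_nn : 0 ≤ ch := dist_nonneg
    have hsqrt : ∀ x : ℝ, x^2 ≤ κ * ch^2 → 0 ≤ x → x ≤ Real.sqrt κ * ch := by
      intro x hx hx0
      have : x ≤ Real.sqrt (κ * ch^2) := by
        rw [show x = Real.sqrt (x^2) from (Real.sqrt_sq hx0).symm]
        exact Real.sqrt_le_sqrt hx
      rwa [Real.sqrt_mul hκ0, Real.sqrt_sq hch_nn] at this
    rw [Prod.dist_eq]
    apply max_le
    · apply hsqrt
      · rw [Real.dist_eq, sq_abs]; exact hui
      · exact abs_nonneg _
    · apply hsqrt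
      · rw [Real.dist_eq, sq_abs]; exact hvi
      · exact abs_nonneg _
  -- injectivity on T
  have hinj : Set.InjOn (Fb r) T := by
    rintro ⟨u, v⟩ hp ⟨u', v'⟩ hq heq
    rw [Set.mem_prod] at hp hq
    have hzp := hzmem v hp.2
    have hzp2 : (r*v)^2 < 1 := by nlinarith [hzp.1, hzp.2]
    have hΔθ : |u/r - u'/r| < 2*π := by
      have h1 : |u - u'| ≤ u₂ - u₁ := by
        rw [abs_le]
        constructor <;> [linarith [hp.1.1, hq.1.2]; linarith [hp.1.2, hq.1.1]]
      have h2 : |u/r - u'/r| = |u - u'| / r := by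
        rw [div_sub_div_same, abs_div, abs_of_pos hrpos]
      rw [h2, div_lt_iff₀ hrpos]
      have hπ : (3:ℝ) < π := Real.pi_gt_three
      calc |u - u'| ≤ u₂ - u₁ := h1
      _ ≤ r * δ := huw
      _ ≤ r * 1 := by nlinarith
      _ < 2 * π * r := by nlinarith
    obtain ⟨hθeq, hzeq⟩ := sp_inj hzp2 hΔθ heq
    have hueq : u = u' := by
      field_simp [hrpos.ne'] at hθeq
      exact hθeq
    have hveq : v = v' := by
      have := mul_left_cancel₀ (ne_of_gt hrpos) hzeq
      exact this
    exact Prod.ext hueq hveq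
  -- measurability of the image
  have hcont := continuous_Fb r
  have hTD : T \ D = ({u₂} ×ˢ Set.Icc a b) ∪ (Set.Icc u₁ u₂ ×ˢ {a}) := by
    ext ⟨u, v⟩
    simp only [Set.mem_diff, Set.mem_prod, Set.mem_Icc, Set.mem_Ico, Set.mem_Ioc,
      Set.mem_union, Set.mem_singleton_iff]
    constructor
    · rintro ⟨⟨⟨h1, h2⟩, h3, h4⟩, h5⟩
      rcases eq_or_lt_of_le h2 with he | hlt
      · exact Or.inl ⟨he, h3, h4⟩
      · right
        refine ⟨⟨h1, h2⟩, ?_⟩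
        by_contra hva
        exact h5 ⟨⟨h1, hlt⟩, lt_of_le_of_ne h3 (Ne.symm hva), h4⟩
    · rintro (⟨rfl, h3, h4⟩ | ⟨⟨h1, h2⟩, rfl⟩)
      · exact ⟨⟨⟨hu.le, le_refl _⟩, h3, h4⟩, fun hc => lt_irrefl _ hc.1.2⟩
      · refine ⟨⟨⟨h1, h2⟩, le_refl _, ?_⟩, fun hc => lt_irrefl _ hc.2.1⟩
        rw [hadef, hbdef]
        exact (div_le_div_iff_of_pos_right hrpos).mpr h12.le
  have himD : Fb r '' D = Fb r '' T \ Fb r '' (T \ D) := by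
    have h1 := hinj.image_diff (t := T \ D)
    rw [Set.diff_diff_cancel_left hDT] at h1
    rw [Set.inter_eq_self_of_subset_right Set.diff_subset] at h1
    exact h1
  have hcomp1 : IsCompact (Fb r '' T) :=
    ((isCompact_Icc.prod isCompact_Icc).image hcont)
  have hcomp2 : IsCompact (Fb r '' (T \ D)) := by
    rw [hTD, Set.image_union]
    exact ((isCompact_singleton.prod isCompact_Icc).image hcont).union
      ((isCompact_Icc.prod isCompact_singleton).image hcont)
  have hmeas : MeasurableSet (Fb r '' D) := by
    rw [himD]
    exact hcomp1.isClosed.measurableSet.diff hcomp2.isClosed.measurableSet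
  refine ⟨hmeas, ?_⟩
  -- antilipschitz estimate and measure comparison
  set K : NNReal := Real.toNNReal (Real.sqrt κ) with hKdef
  have hKcoe : (K : ℝ) = Real.sqrt κ := Real.coe_toNNReal _ (Real.sqrt_nonneg κ)
  have hanti : AntilipschitzWith K (fun x : ↥T => Fb r x.1) := by
    apply AntilipschitzWith.of_le_mul_dist
    intro x y
    rw [Subtype.dist_eq, hKcoe]
    exact dist_bound x.1 x.2 y.1 y.2
  have hbound := hanti.le_hausdorffMeasure_image (by norm_num : (0:ℝ) ≤ 2)
    (Subtype.val ⁻¹' D)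
  have hiso : μH[2] ((Subtype.val : ↥T → ℝ × ℝ) '' (Subtype.val ⁻¹' D))
      = μH[2] ((Subtype.val : ↥T → ℝ × ℝ) ⁻¹' D) :=
    isometry_subtype_coe.hausdorffMeasure_image (Or.inl (by norm_num)) _
  have him : (Subtype.val : ↥T → ℝ × ℝ) '' (Subtype.val ⁻¹' D) = D := by
    rw [Set.image_preimage_eq_inter_range, Subtype.range_coe]
    exact Set.inter_eq_self_of_subset_left hDT
  have him2 : (fun x : ↥T => Fb r x.1) '' (Subtype.val ⁻¹' D) = Fb r '' D := by
    rw [show (fun x : ↥T => Fb r x.1) = Fb r ∘ (Subtype.val : ↥T → ℝ × ℝ) from rfl,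
      Set.image_comp, him]
  rw [him2] at hbound
  rw [him] at hiso
  have hK2 : ((K : ℝ≥0∞)) ^ (2:ℝ) = ENNReal.ofReal κ := by
    have h1 : ((K : ℝ≥0∞)) = ENNReal.ofReal (Real.sqrt κ) := rfl
    rw [h1, ENNReal.ofReal_rpow_of_nonneg (Real.sqrt_nonneg κ) (by norm_num)]
    congr 1
    rw [show ((2:ℝ)) = ((2:ℕ):ℝ) by norm_num, Real.rpow_natCast]
    exact Real.sq_sqrt hκ0
  have hvol : μH[2] D = ENNReal.ofReal (u₂ - u₁) * ENNReal.ofReal ((z₂ - z₁)/r) := by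
    rw [MeasureTheory.hausdorffMeasure_prod_real, hDdef]
    rw [MeasureTheory.Measure.volume_eq_prod, MeasureTheory.Measure.prod_prod,
      Real.volume_Ico, Real.volume_Ioc]
    congr 2
    rw [hbdef, hadef, div_sub_div_same]
  calc ENNReal.ofReal ((u₂ - u₁) * ((z₂ - z₁)/r))
      = μH[2] D := by
        rw [hvol, ENNReal.ofReal_mul (by linarith)]
  _ = μH[2] ((Subtype.val : ↥T → ℝ × ℝ) ⁻¹' D) := hiso
  _ ≤ ((K : ℝ≥0∞)) ^ (2:ℝ) * μH[2] (Fb r '' D) := hbound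
  _ = ENNReal.ofReal κ * μH[2] (Fb r '' D) := by rw [hK2]

set_option maxHeartbeats 1000000 in
lemma hemisphere_bound {N M : ℕ} (hN : 1 ≤ N) (hM : 7 ≤ M) {h : ℝ}
    (hh0 : 0 < h) (hh1 : h < 1) {κ : ℝ} (hκ1 : 1 ≤ κ)
    (hκ : ∀ j : ℕ, j < N →
      1 - ((j:ℝ) * ((1-h)/N))^2
        ≤ κ * ((1 - (((j:ℝ)+1) * ((1-h)/N))^2) * (1 - 5*(2*π/(M:ℝ))^2/48))) :
    ∃ U : Set E3, MeasurableSet U ∧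
      U ⊆ Metric.sphere (0:E3) 1 ∩ {x : E3 | 0 < x 2} ∧
      ENNReal.ofReal (2*π*(1-h)) ≤ ENNReal.ofReal κ * μH[2] U := by
  have hNpos : (0:ℝ) < N := by
    have : (1:ℝ) ≤ N := by exact_mod_cast hN
    linarith
  have hMpos : (0:ℝ) < M := by
    have : (7:ℝ) ≤ M := by exact_mod_cast hM
    linarith
  have hπ := Real.pi_pos
  set Δ : ℝ := (1-h)/N with hΔdef
  have hΔ0 : 0 < Δ := div_pos (by linarith) hNpos
  set δ : ℝ := 2*π/(M:ℝ) with hδdef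
  have hδ0 : 0 < δ := div_pos (by linarith) hMpos
  have hδ1 : δ ≤ 1 := by
    rw [hδdef, div_le_one hMpos]
    have h315 : π < 3.15 := Real.pi_lt_d2
    have : (7:ℝ) ≤ M := by exact_mod_cast hM
    linarith
  set zf : ℕ → ℝ := fun j => (j:ℝ) * Δ with hzfdef
  set rf : ℕ → ℝ := fun j => Real.sqrt (1 - (zf j)^2) with hrfdef
  have hzf_nonneg : ∀ j : ℕ, 0 ≤ zf j := fun j => mul_nonneg (Nat.cast_nonneg j) hΔ0.le
  have hzf_mono : ∀ j : ℕ, zf j < zf (j+1) := by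
    intro j
    simp only [hzfdef, Nat.cast_add, Nat.cast_one]
    nlinarith [Nat.cast_nonneg (α := ℝ) j]
  have hzf_le : ∀ j : ℕ, j ≤ N → zf j ≤ 1 - h := by
    intro j hj
    have hc : (j:ℝ) ≤ N := by exact_mod_cast hj
    simp only [hzfdef]
    calc (j:ℝ) * Δ ≤ (N:ℝ) * Δ := mul_le_mul_of_nonneg_right hc hΔ0.le
    _ = 1 - h := by rw [hΔdef]; field_simp
  have hrf_pos : ∀ j : ℕ, j < N → 0 < rf j := by
    intro j hj
    simp only [hrfdef]
    apply Real.sqrt_pos.2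
    have h0 := hzf_nonneg j
    have h2 : zf j < 1 - h := lt_of_lt_of_le (hzf_mono j) (hzf_le (j+1) (by omega))
    nlinarith
  set P : ℕ × ℕ → Set E3 := fun jk =>
    Fb (rf jk.1) '' (Set.Ico ((jk.2:ℝ) * (rf jk.1 * δ)) (((jk.2:ℝ)+1) * (rf jk.1 * δ))
      ×ˢ Set.Ioc (zf jk.1 / rf jk.1) (zf (jk.1+1) / rf jk.1)) with hPdef
  -- per-piece measurability and measure bound
  have hPB : ∀ j, j < N → ∀ k : ℕ, MeasurableSet (P (j,k)) ∧
      ENNReal.ofReal (δ * Δ) ≤ ENNReal.ofReal κ * μH[2] (P (j,k)) := by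
    intro j hj k
    have hrpos := hrf_pos j hj
    have hz3 : zf (j+1) ≤ 1 - h := hzf_le (j+1) (by omega)
    have hu : ((k:ℝ)) * (rf j * δ) < ((k:ℝ)+1) * (rf j * δ) := by
      nlinarith [mul_pos hrpos hδ0]
    have huw : (((k:ℝ)+1) * (rf j * δ) - (k:ℝ) * (rf j * δ)) ≤ rf j * δ := by ring_nf; rfl
    have ha6 : 1 - (zf j)^2 ≤ κ * ((1 - (zf (j+1))^2) * (1 - 5*δ^2/48)) := by
      have h2 := hκ j hj
      simp only [hzfdef, Nat.cast_add, Nat.cast_one]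
      exact h2
    have hr : Real.sqrt (1 - (zf j)^2) = rf j := by rw [hrfdef]
    have hpb := piece_bound (z₁ := zf j) (z₂ := zf (j+1))
      (u₁ := (k:ℝ) * (rf j * δ)) (u₂ := ((k:ℝ)+1) * (rf j * δ))
      (hzf_nonneg j) (hzf_mono j) (by linarith) hδ0 hδ1 hu
      (by rw [hr]; exact huw) hκ1 ha6
    rw [hr] at hpb
    have hΔeq : zf (j+1) - zf j = Δ := by
      simp only [hzfdef, Nat.cast_add, Nat.cast_one]; ring
    have harg : ((((k:ℝ)+1) * (rf j * δ) - (k:ℝ) * (rf j * δ)) * ((zf (j+1) - zf j) / rf j))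
        = δ * Δ := by
      rw [hΔeq]
      field_simp
      ring
    constructor
    · simp only [hPdef]
      exact hpb.1
    · simp only [hPdef]
      calc ENNReal.ofReal (δ * Δ)
          = ENNReal.ofReal ((((k:ℝ)+1) * (rf j * δ) - (k:ℝ) * (rf j * δ))
            * ((zf (j+1) - zf j) / rf j)) := by rw [harg]
      _ ≤ _ := hpb.2
  -- pieces lie on the sphere in the right band
  have hPsub : ∀ j, j < N → ∀ k : ℕ, P (j,k) ⊆
      Metric.sphere (0:E3) 1 ∩ {x : E3 | x 2 ∈ Set.Ioc (zf j) (zf (j+1))} := by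
    intro j hj k x hx
    simp only [hPdef] at hx
    obtain ⟨⟨u, v⟩, hm, rfl⟩ := hx
    rw [Set.mem_prod] at hm
    have hrpos := hrf_pos j hj
    have hz1 : zf j < rf j * v := by
      have h1 := hm.2.1
      rw [div_lt_iff₀ hrpos] at h1
      linarith [h1]
    have hz2 : rf j * v ≤ zf (j+1) := by
      have h1 := (le_div_iff₀ hrpos).1 hm.2.2
      linarith [h1]
    have hz3 : zf (j+1) ≤ 1 - h := hzf_le (j+1) (by omega)
    constructor
    · apply sp_mem_sphere
      have h0 := hzf_nonneg j
      nlinarith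
    · have hc : (Fb (rf j) (u,v)) 2 = rf j * v := rfl
      simp only [Set.mem_setOf_eq, hc, Set.mem_Ioc]
      exact ⟨hz1, hz2⟩
  -- pairwise disjointness
  have hdisj : (↑(Finset.range N ×ˢ Finset.range M) : Set (ℕ × ℕ)).PairwiseDisjoint P := by
    rintro ⟨j, k⟩ hjk ⟨j', k'⟩ hjk' hne
    simp only [Finset.coe_product, Set.mem_prod, Finset.mem_coe, Finset.mem_range] at hjk hjk'
    rw [Function.onFun, Set.disjoint_left]
    intro x hx hx'
    have hs := hPsub j hjk.1 k hx
    have hs' := hPsub j' hjk'.1 k' hx'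
    have h1 := hs.2
    have h2 := hs'.2
    simp only [Set.mem_setOf_eq, Set.mem_Ioc] at h1 h2
    have hjj : j = j' := by
      by_contra hne2
      rcases Nat.lt_or_ge j j' with hlt | hge
      · have hcast : ((j:ℝ)+1) ≤ (j':ℝ) := by exact_mod_cast Nat.succ_le_of_lt hlt
        have : zf (j+1) ≤ zf j' := by
          simp only [hzfdef, Nat.cast_add, Nat.cast_one]
          exact mul_le_mul_of_nonneg_right hcast hΔ0.le
        linarith [h1.2, h2.1]
      · have hlt : j' < j := lt_of_le_of_ne hge (Ne.symm hne2)
        have hcast : ((j':ℝ)+1) ≤ (j:ℝ) := by exact_mod_cast Nat.succ_le_of_lt hlt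
        have : zf (j'+1) ≤ zf j := by
          simp only [hzfdef, Nat.cast_add, Nat.cast_one]
          exact mul_le_mul_of_nonneg_right hcast hΔ0.le
        linarith [h1.1, h2.2]
    subst hjj
    have hkk : k ≠ k' := fun hk => hne (by rw [hk])
    simp only [hPdef] at hx hx'
    obtain ⟨⟨u, v⟩, hm, hxe⟩ := hx
    obtain ⟨⟨u', v'⟩, hm', hxe'⟩ := hx'
    rw [Set.mem_prod] at hm hm'
    have hrpos := hrf_pos j hjk.1
    have hz3 : zf (j+1) ≤ 1 - h := hzf_le (j+1) (by omega)
    have hzv1 : zf j < rf j * v := by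
      have hh := hm.2.1; rw [div_lt_iff₀ hrpos] at hh; linarith
    have hzv2 : rf j * v ≤ zf (j+1) := by
      have hh := (le_div_iff₀ hrpos).1 hm.2.2; linarith
    have hzsq : (rf j * v)^2 < 1 := by nlinarith [hzf_nonneg j]
    have hc0 : 0 < rf j * δ := mul_pos hrpos hδ0
    have hMc : ((M:ℝ)) * (rf j * δ) = 2*π*rf j := by
      rw [hδdef]; field_simp
    have hu_ub : ∀ kk : ℕ, kk < M → ∀ w : ℝ,
        w ∈ Set.Ico ((kk:ℝ) * (rf j * δ)) (((kk:ℝ)+1) * (rf j * δ)) →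
        0 ≤ w ∧ w < 2*π*rf j := by
      intro kk hkk w hw
      constructor
      · exact le_trans (by positivity) hw.1
      · have hcst : ((kk:ℝ)+1) ≤ M := by exact_mod_cast Nat.succ_le_of_lt hkk
        calc w < ((kk:ℝ)+1) * (rf j * δ) := hw.2
        _ ≤ (M:ℝ) * (rf j * δ) := mul_le_mul_of_nonneg_right hcst hc0.le
        _ = 2*π*rf j := hMc
    have hur := hu_ub k hjk.2 u hm.1
    have hur' := hu_ub k' hjk'.2 u' hm'.1
    have heq : sp (u / rf j) (rf j * v) = sp (u' / rf j) (rf j * v') := by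
      have e1 : Fb (rf j) (u,v) = x := hxe
      have e2 : Fb (rf j) (u',v') = x := hxe'
      exact e1.trans e2.symm
    have hΔθ : |u / rf j - u' / rf j| < 2*π := by
      rw [div_sub_div_same, abs_div, abs_of_pos hrpos, div_lt_iff₀ hrpos]
      rw [abs_lt]
      constructor
      · nlinarith [hur.1, hur.2, hur'.1, hur'.2]
      · nlinarith [hur.1, hur.2, hur'.1, hur'.2]
    obtain ⟨hθeq, hzeq⟩ := sp_inj hzsq hΔθ heq
    have hueq : u = u' := by
      field_simp [hrpos.ne'] at hθeq
      exact hθeq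
    apply hkk
    rcases lt_trichotomy k k' with hlt | heq2 | hlt
    · exfalso
      have hcst : ((k:ℝ)+1) ≤ (k':ℝ) := by exact_mod_cast Nat.succ_le_of_lt hlt
      have h3 := hm.1.2
      have h4 := hm'.1.1
      rw [← hueq] at h4
      nlinarith [mul_le_mul_of_nonneg_right hcst hc0.le]
    · exact heq2
    · exfalso
      have hcst : ((k':ℝ)+1) ≤ (k:ℝ) := by exact_mod_cast Nat.succ_le_of_lt hlt
      have h3 := hm'.1.2
      have h4 := hm.1.1
      rw [hueq] at h4
      nlinarith [mul_le_mul_of_nonneg_right hcst hc0.le]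
  -- assemble
  refine ⟨⋃ jk ∈ Finset.range N ×ˢ Finset.range M, P jk, ?_, ?_, ?_⟩
  · apply Set.Finite.measurableSet_biUnion (Finset.finite_toSet _)
    rintro ⟨j, k⟩ hjk
    simp only [Finset.coe_product, Set.mem_prod, Finset.mem_coe, Finset.mem_range] at hjk
    exact (hPB j hjk.1 k).1
  · intro x hx
    simp only [Set.mem_iUnion] at hx
    obtain ⟨⟨j, k⟩, hjk, hx⟩ := hx
    simp only [Finset.mem_product, Finset.mem_range] at hjk
    have hs := hPsub j hjk.1 k hx
    refine ⟨hs.1, ?_⟩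
    have h1 := hs.2
    simp only [Set.mem_setOf_eq, Set.mem_Ioc] at h1 ⊢
    linarith [hzf_nonneg j, h1.1]
  · have hmeas : ∀ jk ∈ Finset.range N ×ˢ Finset.range M, MeasurableSet (P jk) := by
      rintro ⟨j, k⟩ hjk
      simp only [Finset.mem_product, Finset.mem_range] at hjk
      exact (hPB j hjk.1 k).1
    rw [measure_biUnion_finset hdisj hmeas]
    have hsum : ∑ jk ∈ Finset.range N ×ˢ Finset.range M, ENNReal.ofReal (δ * Δ)
        ≤ ∑ jk ∈ Finset.range N ×ˢ Finset.range M, ENNReal.ofReal κ * μH[2] (P jk) := by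
      apply Finset.sum_le_sum
      rintro ⟨j, k⟩ hjk
      simp only [Finset.mem_product, Finset.mem_range] at hjk
      exact (hPB j hjk.1 k).2
    have hconst : ∑ _jk ∈ Finset.range N ×ˢ Finset.range M, ENNReal.ofReal (δ * Δ)
        = ENNReal.ofReal (2*π*(1-h)) := by
      rw [Finset.sum_const, Finset.card_product, Finset.card_range, Finset.card_range]
      rw [nsmul_eq_mul]
      rw [show ((N * M : ℕ) : ℝ≥0∞) = ENNReal.ofReal ((N * M : ℕ) : ℝ) from
        (ENNReal.ofReal_natCast _).symm]
      rw [← ENNReal.ofReal_mul (by positivity)]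
      congr 1
      push_cast
      rw [hδdef, hΔdef]
      field_simp
    calc ENNReal.ofReal (2*π*(1-h))
        = ∑ _jk ∈ Finset.range N ×ˢ Finset.range M, ENNReal.ofReal (δ * Δ) := hconst.symm
    _ ≤ ∑ jk ∈ Finset.range N ×ˢ Finset.range M, ENNReal.ofReal κ * μH[2] (P jk) := hsum
    _ = ENNReal.ofReal κ * ∑ jk ∈ Finset.range N ×ˢ Finset.range M, μH[2] (P jk) := by
        rw [Finset.mul_sum]

set_option maxHeartbeats 2000000 in
lemma sphere_double {N M : ℕ} (hN : 1 ≤ N) (hM : 7 ≤ M) {h : ℝ}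
    (hh0 : 0 < h) (hh1 : h < 1) {κ : ℝ} (hκ1 : 1 ≤ κ)
    (hκ : ∀ j : ℕ, j < N →
      1 - ((j:ℝ) * ((1-h)/N))^2
        ≤ κ * ((1 - (((j:ℝ)+1) * ((1-h)/N))^2) * (1 - 5*(2*π/(M:ℝ))^2/48))) :
    ENNReal.ofReal (4*π*(1-h)) ≤ ENNReal.ofReal κ * μH[2] (Metric.sphere (0:E3) 1) := by
  obtain ⟨U, hUm, hUsub, hUb⟩ := hemisphere_bound hN hM hh0 hh1 hκ1 hκ
  set e : E3 ≃ᵢ E3 := IsometryEquiv.neg E3 with hedef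
  set V : Set E3 := e ⁻¹' U with hVdef
  have hVm : MeasurableSet V := hUm.preimage e.continuous.measurable
  have hVμ : μH[2] V = μH[2] U := e.hausdorffMeasure_preimage 2 U
  have hVmem : ∀ x : E3, x ∈ V ↔ -x ∈ U := by
    intro x
    rw [hVdef, Set.mem_preimage, hedef]
    simp [IsometryEquiv.neg]
    exact Iff.rfl
  have hdisjUV : Disjoint U V := by
    rw [Set.disjoint_left]
    intro x hxU hxV
    have h1 : 0 < x 2 := (hUsub hxU).2
    have h2 : 0 < (-x) 2 := (hUsub ((hVmem x).1 hxV)).2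
    rw [PiLp.neg_apply] at h2
    linarith
  have hVsub : V ⊆ Metric.sphere (0:E3) 1 := by
    intro x hx
    have := (hUsub ((hVmem x).1 hx)).1
    rw [mem_sphere_zero_iff_norm] at this ⊢
    rwa [norm_neg] at this
  have hUV : U ∪ V ⊆ Metric.sphere (0:E3) 1 :=
    Set.union_subset (fun x hx => (hUsub hx).1) hVsub
  calc ENNReal.ofReal (4*π*(1-h))
      = 2 * ENNReal.ofReal (2*π*(1-h)) := by
        rw [show (4:ℝ)*π*(1-h) = 2*(2*π*(1-h)) by ring,
          ENNReal.ofReal_mul (by norm_num : (0:ℝ) ≤ 2)]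
        norm_num
  _ ≤ 2 * (ENNReal.ofReal κ * μH[2] U) := mul_le_mul_right hUb 2
  _ = ENNReal.ofReal κ * (μH[2] U + μH[2] V) := by rw [hVμ, two_mul]; ring
  _ = ENNReal.ofReal κ * μH[2] (U ∪ V) := by
        rw [measure_union hdisjUV hVm]
  _ ≤ ENNReal.ofReal κ * μH[2] (Metric.sphere (0:E3) 1) :=
        mul_le_mul_right (measure_mono hUV) _

set_option maxHeartbeats 2000000 in
lemma sphere_area_ge : ENNReal.ofReal (4 * π) ≤ μH[2] (Metric.sphere (0:E3) 1) := by
  have hπ := Real.pi_pos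
  have h315 : π < 3.15 := Real.pi_lt_d2
  set A := μH[2] (Metric.sphere (0:E3) 1) with hAdef
  set κn : ℕ → ℝ := fun n => (1 + 3/(n:ℝ)) / (1 - 5*(2*π/(7*(n:ℝ)))^2/48) with hκndef
  have hden : ∀ n : ℕ, 2 ≤ n → 5*(2*π/(7*(n:ℝ)))^2/48 < 1/2 := by
    intro n hn
    have hn2 : (2:ℝ) ≤ n := by exact_mod_cast hn
    have hd1 : 2*π/(7*(n:ℝ)) ≤ 2*π/14 := by
      apply div_le_div_of_nonneg_left (by linarith) (by norm_num) (by linarith)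
    have hd0 : 0 < 2*π/(7*(n:ℝ)) := by positivity
    nlinarith [hd1, hd0]
  have hκn1 : ∀ n : ℕ, 2 ≤ n → 1 ≤ κn n := by
    intro n hn
    have hn2 : (2:ℝ) ≤ n := by exact_mod_cast hn
    have hd := hden n hn
    rw [hκndef]
    rw [le_div_iff₀ (by linarith)]
    have : 0 < 3/(n:ℝ) := by positivity
    nlinarith
  have key : ∀ n : ℕ, 2 ≤ n →
      ENNReal.ofReal (4*π*(1-1/(n:ℝ)) / κn n) ≤ A := by
    intro n hn
    have hn2 : (2:ℝ) ≤ n := by exact_mod_cast hn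
    have hd := hden n hn
    have hκpos : 0 < κn n := lt_of_lt_of_le one_pos (hκn1 n hn)
    -- apply sphere_double with N = n^2, M = 7*n, h = 1/n, κ = κn n
    have hmain := sphere_double (N := n^2) (M := 7*n)
      (by nlinarith [hn] : 1 ≤ n^2) (by omega : 7 ≤ 7*n)
      (h := 1/(n:ℝ)) (by positivity) (by rw [div_lt_one (by linarith)]; linarith)
      (hκn1 n hn) ?hband
    case hband =>
      intro j hj
      -- arithmetic verification of the band condition
      have hNcast : ((n^2 : ℕ):ℝ) = (n:ℝ)^2 := by push_cast; ring
      have hMcast : ((7*n : ℕ):ℝ) = 7*(n:ℝ) := by push_cast; ring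
      rw [hNcast, hMcast]
      set Δ : ℝ := (1 - 1/(n:ℝ))/((n:ℝ)^2) with hΔdef
      have hΔ0 : 0 < Δ := by
        rw [hΔdef]
        apply div_pos
        · rw [sub_pos, div_lt_one (by linarith)]; linarith
        · positivity
      set z : ℝ := (j:ℝ) * Δ with hzdef
      set Z : ℝ := ((j:ℝ)+1) * Δ with hZdef
      have hjN : ((j:ℝ)+1) ≤ (n:ℝ)^2 := by
        have : (j+1 : ℕ) ≤ n^2 := hj
        exact_mod_cast this
      have hz0 : 0 ≤ z := mul_nonneg (Nat.cast_nonneg j) hΔ0.le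
      have hzZ : z ≤ Z := by
        rw [hzdef, hZdef]
        nlinarith
      have hZle : Z ≤ 1 - 1/(n:ℝ) := by
        rw [hZdef, hΔdef]
        rw [show ((j:ℝ)+1) * ((1 - 1/(n:ℝ))/((n:ℝ)^2))
          = (((j:ℝ)+1)/((n:ℝ)^2)) * (1 - 1/(n:ℝ)) by ring]
        have h1 : ((j:ℝ)+1)/((n:ℝ)^2) ≤ 1 := by
          rw [div_le_one (by positivity)]
          exact hjN
        nlinarith [h1, show (0:ℝ) ≤ 1 - 1/(n:ℝ) by
          rw [sub_nonneg, div_le_one (by linarith)]; linarith]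
      have hZz : Z^2 - z^2 ≤ 2*Δ := by
        have hZ1 : Z ≤ 1 := by
          have : 1/(n:ℝ) > 0 := by positivity
          linarith
        have hfact : Z - z = Δ := by rw [hZdef, hzdef]; ring
        nlinarith [hz0, hzZ, hZ1, hΔ0.le]
      have h1Z : 1/(n:ℝ) ≤ 1 - Z^2 := by
        have hZ0 : 0 ≤ Z := le_trans hz0 hzZ
        have hinv : 0 < 1/(n:ℝ) := by positivity
        have hinv1 : 1/(n:ℝ) ≤ 1/2 := by
          rw [div_le_div_iff₀ (by linarith) (by norm_num)]; linarith
        nlinarith [hZle, hZ0]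
      have hΔle : 2*Δ ≤ 2/(n:ℝ)^2 := by
        have hn2pos : (0:ℝ) < (n:ℝ)^2 := by positivity
        rw [hΔdef, show (2:ℝ) * ((1 - 1/(n:ℝ))/(n:ℝ)^2) = (2*(1 - 1/(n:ℝ)))/(n:ℝ)^2 from by
          ring, div_le_div_iff₀ hn2pos hn2pos]
        have hinv : (0:ℝ) < 1/(n:ℝ) := by positivity
        nlinarith
      -- final: 1 - z^2 ≤ κn n * ((1-Z^2)*(1-c))
      have hc : κn n * ((1 - Z^2) * (1 - 5*(2*π/(7*(n:ℝ)))^2/48))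
          = (1 + 3/(n:ℝ)) * (1 - Z^2) := by
        have hcpos : (0:ℝ) < 1 - 5*(2*π/(7*(n:ℝ)))^2/48 := by linarith
        rw [hκndef]
        rw [div_mul_eq_mul_div, show (1 - Z^2) * (1 - 5*(2*π/(7*(n:ℝ)))^2/48)
          = (1 - 5*(2*π/(7*(n:ℝ)))^2/48) * (1 - Z^2) from mul_comm _ _,
          show (1 + 3/(n:ℝ)) * ((1 - 5*(2*π/(7*(n:ℝ)))^2/48) * (1 - Z^2))
          = ((1 + 3/(n:ℝ)) * (1 - Z^2)) * (1 - 5*(2*π/(7*(n:ℝ)))^2/48) from by ring,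
          mul_div_assoc, div_self hcpos.ne', mul_one]
      rw [hc]
      have hfrac : 3/(n:ℝ) * (1 - Z^2) ≥ 3/(n:ℝ)^2 := by
        have h3n : (0:ℝ) < 3/(n:ℝ) := by positivity
        calc 3/(n:ℝ) * (1 - Z^2) ≥ 3/(n:ℝ) * (1/(n:ℝ)) :=
              mul_le_mul_of_nonneg_left h1Z h3n.le
        _ = 3/(n:ℝ)^2 := by field_simp
      have he1 : (1 + 3/(n:ℝ)) * (1 - Z^2) = (1 - Z^2) + 3/(n:ℝ) * (1 - Z^2) := by ring
      have he2 : (0:ℝ) ≤ 1/(n:ℝ)^2 := by positivity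
      have he3 : (2:ℝ)/(n:ℝ)^2 = 2*(1/(n:ℝ)^2) := by ring
      have he4 : (3:ℝ)/(n:ℝ)^2 = 3*(1/(n:ℝ)^2) := by ring
      rw [he1]
      rw [he3] at hΔle
      rw [he4] at hfrac
      linarith [hfrac, hZz, hΔle]
    -- now convert hmain to the divided form
    rw [ENNReal.ofReal_div_of_pos hκpos]
    rw [ENNReal.div_le_iff_le_mul
      (Or.inl (ENNReal.ofReal_pos.2 hκpos).ne') (Or.inl ENNReal.ofReal_ne_top)]
    exact le_trans hmain (le_of_eq (mul_comm _ _))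
  -- take the limit
  have t0 : Filter.Tendsto (fun n : ℕ => 1/(n:ℝ)) Filter.atTop (nhds 0) :=
    tendsto_one_div_atTop_nhds_zero_nat
  have hA1 : Filter.Tendsto (fun n : ℕ => 4*π*(1 - 1/(n:ℝ))) Filter.atTop (nhds (4*π)) := by
    have := (tendsto_const_nhds (x := (1:ℝ)) (f := Filter.atTop (α := ℕ))).sub t0
    have h2 := (tendsto_const_nhds (x := (4*π:ℝ)) (f := Filter.atTop (α := ℕ))).mul this
    simpa using h2
  have hB1 : Filter.Tendsto (fun n : ℕ => κn n) Filter.atTop (nhds 1) := by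
    have h3 : Filter.Tendsto (fun n : ℕ => 3/(n:ℝ)) Filter.atTop (nhds 0) := by
      have := t0.const_mul (3:ℝ)
      simpa [div_eq_mul_inv, mul_assoc] using this
    have hnum : Filter.Tendsto (fun n : ℕ => 1 + 3/(n:ℝ)) Filter.atTop (nhds 1) := by
      have := (tendsto_const_nhds (x := (1:ℝ)) (f := Filter.atTop (α := ℕ))).add h3
      simpa using this
    have hd : Filter.Tendsto (fun n : ℕ => 2*π/(7*(n:ℝ))) Filter.atTop (nhds 0) := by
      have := t0.const_mul (2*π/7 : ℝ)
      have heq : (fun n : ℕ => 2*π/7 * (1/(n:ℝ))) = fun n : ℕ => 2*π/(7*(n:ℝ)) := by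
        funext n
        by_cases hn : (n:ℝ) = 0
        · rw [hn]; simp
        · field_simp
      rw [heq] at this
      simpa using this
    have hd2 : Filter.Tendsto (fun n : ℕ => 1 - 5*(2*π/(7*(n:ℝ)))^2/48)
        Filter.atTop (nhds 1) := by
      have hsq := hd.mul hd
      have h5 := hsq.const_mul (5/48 : ℝ)
      have := (tendsto_const_nhds (x := (1:ℝ)) (f := Filter.atTop (α := ℕ))).sub h5
      have heq : (fun n : ℕ => 1 - 5/48 * ((2*π/(7*(n:ℝ))) * (2*π/(7*(n:ℝ)))))
          = fun n : ℕ => 1 - 5*(2*π/(7*(n:ℝ)))^2/48 := by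
        funext n; ring
      rw [heq] at this
      simpa using this
    have := hnum.div hd2 (by norm_num)
    rw [hκndef]
    convert this using 1 <;> norm_num [Pi.div_def]
  have hten : Filter.Tendsto (fun n : ℕ => 4*π*(1 - 1/(n:ℝ)) / κn n)
      Filter.atTop (nhds (4*π)) := by
    have := hA1.div hB1 (by norm_num)
    simpa [Pi.div_def] using this
  have htenE : Filter.Tendsto (fun n : ℕ => ENNReal.ofReal (4*π*(1 - 1/(n:ℝ)) / κn n))
      Filter.atTop (nhds (ENNReal.ofReal (4*π))) :=
    (ENNReal.continuous_ofReal.tendsto _).comp hten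
  exact le_of_tendsto htenE (Filter.eventually_atTop.2 ⟨2, fun n hn => key n hn⟩)

lemma coe_toIcoMod_eq {L : ℝ} (hL : 0 < L) (s : ℝ) :
    ((toIcoMod hL 0 s : ℝ) : AddCircle L) = (s : AddCircle L) := by
  have h : s - toIcoMod hL 0 s = toIcoDiv hL 0 s • L := self_sub_toIcoMod hL 0 s
  have h2 : ((s - toIcoMod hL 0 s : ℝ) : AddCircle L) = 0 := by
    rw [h]
    exact (AddCircle.coe_eq_zero_iff _).2 ⟨toIcoDiv hL 0 s, rfl⟩
  have h3 : (s : AddCircle L) - ((toIcoMod hL 0 s : ℝ) : AddCircle L) = 0 := by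
    rw [← QuotientAddGroup.mk_sub]
    exact h2
  have := sub_eq_zero.mp h3
  exact this.symm

lemma exists_rep {L : ℝ} (hL : 0 < L) (x : AddCircle L) :
    ∃ s ∈ Set.Ico (0:ℝ) L, (s : AddCircle L) = x := by
  obtain ⟨s, rfl⟩ := QuotientAddGroup.mk_surjective x
  exact ⟨toIcoMod hL 0 s, toIcoMod_mem_Ico' hL s, coe_toIcoMod_eq hL s⟩

lemma count_ge_two {L : ℝ} {γ : AddCircle L → E3} (hL : 0 < L) (hc : Continuous γ)
    (hhull : Metric.sphere (0:E3) 1 ⊆ convexHull ℝ (Set.range γ))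
    {p : E3} (hp : p ∈ Metric.sphere (0:E3) 1) (hpr : p ∉ Set.range γ) :
    2 ≤ ({t ∈ Set.Ico (0:ℝ) L | inner ℝ (liftCurve L γ t) p = (1:ℝ)}).encard := by
  haveI : Fact (0 < L) := ⟨hL⟩
  set S := {t ∈ Set.Ico (0:ℝ) L | inner ℝ (liftCurve L γ t) p = (1:ℝ)} with hS
  suffices h : ∃ t₁ ∈ S, ∃ t₂ ∈ S, t₁ ≠ t₂ by
    obtain ⟨t₁, h₁, t₂, h₂, hne⟩ := h
    calc (2:ℕ∞) = ({t₁, t₂} : Set ℝ).encard := (Set.encard_pair hne).symm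
    _ ≤ S.encard := Set.encard_le_encard (by rintro x (rfl | rfl) <;> assumption)
  have hnorm : ‖p‖ = 1 := mem_sphere_zero_iff_norm.1 hp
  have hpp : (inner ℝ p p : ℝ) = 1 := by
    rw [real_inner_self_eq_norm_mul_norm, hnorm]; ring
  -- there is a point of the curve on the far side
  have hneg : ∃ x : AddCircle L, (inner ℝ (γ x) p : ℝ) ≤ -1 := by
    by_contra h
    push_neg at h
    have hconv : Convex ℝ {v : E3 | (-1:ℝ) < inner ℝ v p} :=
      convex_halfSpace_gt ⟨fun a b => inner_add_left a b p, fun c a => real_inner_smul_left a p c⟩ _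
    have hsub : convexHull ℝ (Set.range γ) ⊆ {v : E3 | (-1:ℝ) < inner ℝ v p} :=
      convexHull_min (by rintro v ⟨x, rfl⟩; exact h x) hconv
    have hm : -p ∈ convexHull ℝ (Set.range γ) :=
      hhull (by simp [mem_sphere_zero_iff_norm, hnorm])
    have := hsub hm
    simp only [Set.mem_setOf_eq, inner_neg_left, hpp] at this
    linarith
  by_cases hgt : ∃ x : AddCircle L, (1:ℝ) < inner ℝ (γ x) p
  · -- IVT case
    obtain ⟨xa, hxa⟩ := hgt
    obtain ⟨xb, hxb⟩ := hneg
    set g : ℝ → ℝ := fun s => inner ℝ (γ (s : AddCircle L)) p with hg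
    have hgc : Continuous g := by
      apply Continuous.inner _ continuous_const
      exact hc.comp continuous_quotient_mk'
    obtain ⟨a, ha_mem, ha_eq⟩ := exists_rep hL xa
    obtain ⟨b1, hb1_mem, hb1_eq⟩ := exists_rep hL xb
    have hga : 1 < g a := by rw [hg]; simpa [ha_eq] using hxa
    have hgb1 : g b1 ≤ -1 := by rw [hg]; simpa [hb1_eq] using hxb
    have hb1a : b1 ≠ a := by intro h; rw [h] at hgb1; linarith
    set b := if b1 ≤ a then b1 + L else b1 with hbdef
    have hgb : g b ≤ -1 := by
      by_cases h : b1 ≤ a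
      · rw [hbdef, if_pos h]
        simpa [hg, AddCircle.coe_add_period] using hgb1
      · rw [hbdef, if_neg h]
        exact hgb1
    have hab : a < b ∧ b < a + L := by
      by_cases h : b1 ≤ a
      · have hlt : b1 < a := lt_of_le_of_ne h hb1a
        rw [hbdef, if_pos h]
        constructor
        · have := hb1_mem.1; have := ha_mem.2; linarith
        · linarith
      · push_neg at h
        rw [hbdef, if_neg (not_le.mpr h)]
        exact ⟨h, by have := hb1_mem.2; have := ha_mem.1; linarith⟩
    have hgaL : 1 < g (a + L) := by
      have : g (a + L) = g a := by simp [hg, AddCircle.coe_add_period]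
      rw [this]; exact hga
    obtain ⟨s₁, hs₁mem, hs₁⟩ := intermediate_value_Ioo' hab.1.le hgc.continuousOn
      (show (1:ℝ) ∈ Set.Ioo (g b) (g a) from ⟨by linarith, hga⟩)
    obtain ⟨s₂, hs₂mem, hs₂⟩ := intermediate_value_Ioo hab.2.le hgc.continuousOn
      (show (1:ℝ) ∈ Set.Ioo (g b) (g (a + L)) from ⟨by linarith, hgaL⟩)
    refine ⟨toIcoMod hL 0 s₁, ⟨toIcoMod_mem_Ico' hL s₁, ?_⟩,
            toIcoMod hL 0 s₂, ⟨toIcoMod_mem_Ico' hL s₂, ?_⟩, ?_⟩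
    · show (inner ℝ (γ ((toIcoMod hL 0 s₁ : ℝ) : AddCircle L)) p : ℝ) = 1
      rw [coe_toIcoMod_eq hL s₁]; exact hs₁
    · show (inner ℝ (γ ((toIcoMod hL 0 s₂ : ℝ) : AddCircle L)) p : ℝ) = 1
      rw [coe_toIcoMod_eq hL s₂]; exact hs₂
    · intro h
      have hcoe : (s₁ : AddCircle L) = (s₂ : AddCircle L) := by
        rw [← coe_toIcoMod_eq hL s₁, ← coe_toIcoMod_eq hL s₂, h]
      have hmem₁ : s₁ ∈ Set.Ico a (a + L) := ⟨hs₁mem.1.le, lt_trans hs₁mem.2 hab.2⟩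
      have hmem₂ : s₂ ∈ Set.Ico a (a + L) := ⟨le_of_lt (lt_trans hab.1 hs₂mem.1), hs₂mem.2⟩
      rw [AddCircle.coe_eq_coe_iff_of_mem_Ico hmem₁ hmem₂] at hcoe
      have : s₁ < s₂ := lt_trans hs₁mem.2 hs₂mem.1
      linarith
  · -- convexity case
    push_neg at hgt
    have hm : p ∈ convexHull ℝ (Set.range γ) := hhull hp
    rw [convexHull_eq] at hm
    obtain ⟨ι, t, w, z, hw0, hw1, hz, hcm⟩ := hm
    have hsum : ∑ i ∈ t, w i • z i = p := by
      rw [← Finset.centerMass_eq_of_sum_1 t z hw1]; exact hcm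
    have hinner : ∑ i ∈ t, w i * (inner ℝ (z i) p : ℝ) = 1 := by
      have h := congrArg (fun v : E3 => (inner ℝ v p : ℝ)) hsum
      simp only [sum_inner, real_inner_smul_left] at h
      rw [hpp] at h
      exact h
    have hle : ∀ i ∈ t, (inner ℝ (z i) p : ℝ) ≤ 1 := by
      intro i hi
      obtain ⟨x, hx⟩ := hz i hi
      rw [← hx]; exact hgt x
    have key : ∀ i ∈ t, w i ≠ 0 → (inner ℝ (z i) p : ℝ) = 1 := by
      have hzero : ∑ i ∈ t, w i * (1 - inner ℝ (z i) p) = 0 := by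
        have : ∑ i ∈ t, w i * (1 - (inner ℝ (z i) p : ℝ))
            = (∑ i ∈ t, w i) - ∑ i ∈ t, w i * (inner ℝ (z i) p : ℝ) := by
          rw [← Finset.sum_sub_distrib]
          exact Finset.sum_congr rfl fun i _ => by ring
        rw [this, hw1, hinner]; ring
      have hnn : ∀ i ∈ t, 0 ≤ w i * (1 - (inner ℝ (z i) p : ℝ)) := fun i hi =>
        mul_nonneg (hw0 i hi) (by linarith [hle i hi])
      intro i hi hwi
      have := (Finset.sum_eq_zero_iff_of_nonneg hnn).1 hzero i hi
      have h1 : (1 - (inner ℝ (z i) p : ℝ)) = 0 := by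
        rcases mul_eq_zero.1 this with h | h
        · exact absurd h hwi
        · exact h
      linarith [h1]
    obtain ⟨i₀, hi₀t, hi₀⟩ := Finset.exists_ne_zero_of_sum_ne_zero (hw1 ▸ one_ne_zero)
    by_cases h2 : ∃ i ∈ t, w i ≠ 0 ∧ z i ≠ z i₀
    · obtain ⟨i₁, hi₁t, hwi₁, hzz⟩ := h2
      obtain ⟨x₀, hx₀⟩ := hz i₀ hi₀t
      obtain ⟨x₁, hx₁⟩ := hz i₁ hi₁t
      obtain ⟨t₁, ht₁mem, ht₁eq⟩ := exists_rep hL x₀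
      obtain ⟨t₂, ht₂mem, ht₂eq⟩ := exists_rep hL x₁
      refine ⟨t₁, ⟨ht₁mem, ?_⟩, t₂, ⟨ht₂mem, ?_⟩, ?_⟩
      · show (inner ℝ (γ (t₁ : AddCircle L)) p : ℝ) = 1
        rw [ht₁eq, hx₀]; exact key i₀ hi₀t hi₀
      · show (inner ℝ (γ (t₂ : AddCircle L)) p : ℝ) = 1
        rw [ht₂eq, hx₁]; exact key i₁ hi₁t hwi₁
      · intro h
        apply hzz
        rw [← hx₀, ← hx₁, ← ht₁eq, ← ht₂eq, h]
    · push_neg at h2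
      exfalso
      apply hpr
      have : p = z i₀ := by
        rw [← hsum]
        rw [show ∑ i ∈ t, w i • z i = ∑ i ∈ t, w i • z i₀ from
          Finset.sum_congr rfl fun i hi => by
            by_cases hw : w i = 0
            · simp [hw]
            · rw [h2 i hi hw]]
        rw [← Finset.sum_smul, hw1, one_smul]
      rw [this]
      exact hz i₀ hi₀t

lemma range_null {L : ℝ} {γ : AddCircle L → E3} (hL : 0 < L)
    (hlip : LipschitzWith 1 (liftCurve L γ)) : μH[2] (Set.range γ) = 0 := by
  have hsub : Set.range γ ⊆ liftCurve L γ '' (Set.Icc 0 L) := by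
    rintro x ⟨q, rfl⟩
    obtain ⟨s, rfl⟩ := QuotientAddGroup.mk_surjective q
    refine ⟨toIcoMod hL 0 s, ?_, ?_⟩
    · have := toIcoMod_mem_Ico' hL s
      exact ⟨this.1, this.2.le⟩
    · show γ _ = γ _
      rw [coe_toIcoMod_eq hL s]
  have h1 : μH[1] (Set.range γ) ≠ ⊤ := by
    have hb := hlip.hausdorffMeasure_image_le zero_le_one (Set.Icc (0:ℝ) L)
    have hIcc : μH[1] (Set.Icc (0:ℝ) L) = ENNReal.ofReal L := by
      rw [MeasureTheory.hausdorffMeasure_real, Real.volume_Icc, sub_zero]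
    intro htop
    have h2 : μH[1] (Set.range γ) ≤ μH[1] (liftCurve L γ '' (Set.Icc 0 L)) :=
      measure_mono hsub
    rw [htop] at h2
    have h3 := le_trans h2 hb
    rw [hIcc] at h3
    simp at h3
  rcases MeasureTheory.Measure.hausdorffMeasure_zero_or_top (by norm_num : (1:ℝ) < 2)
    (Set.range γ) with h | h
  · exact h
  · exact absurd h h1

/-- Any closed rectifiable curve `γ : ℝ/L → ℝ³`, parameterized with
constant unit speed, whose convex hull contains the unit sphere, has horizon `H(γ) ≥ 8π`. -/
theorem horizon_ge_eight_pi
    (L : ℝ) (γ : AddCircle L → E3) (hγ : IsInspectionCurve L γ) :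
    ENNReal.ofReal (8 * π) ≤ horizonCurve L γ := by
  obtain ⟨hL, hc, hlip, _, hhull⟩ := hγ
  haveI : Fact (0 < L) := ⟨hL⟩
  have hsph_meas : MeasurableSet (Metric.sphere (0:E3) 1) :=
    (Metric.isClosed_sphere).measurableSet
  have hrange_meas : MeasurableSet (Set.range γ) :=
    (isCompact_range hc).isClosed.measurableSet
  have hmono : ∫⁻ p in Metric.sphere (0:E3) 1,
      ((Set.range γ)ᶜ.indicator (fun _ => (2:ℝ≥0∞))) p ∂μH[2] ≤ horizonCurve L γ := by
    apply lintegral_mono_ae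
    filter_upwards [ae_restrict_mem hsph_meas] with p hp
    by_cases hpr : p ∈ Set.range γ
    · rw [Set.indicator_of_notMem (by simpa using hpr)]
      exact zero_le
    · rw [Set.indicator_of_mem (by simpa using hpr)]
      have h2 := count_ge_two hL hc hhull hp hpr
      calc (2:ℝ≥0∞) = ((2:ℕ∞) : ℝ≥0∞) := by simp
      _ ≤ _ := by exact_mod_cast h2
  have hval : ∫⁻ p in Metric.sphere (0:E3) 1,
      ((Set.range γ)ᶜ.indicator (fun _ => (2:ℝ≥0∞))) p ∂μH[2]
      = 2 * μH[2] ((Set.range γ)ᶜ ∩ Metric.sphere (0:E3) 1) := by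
    rw [lintegral_indicator hrange_meas.compl]
    rw [Measure.restrict_restrict hrange_meas.compl]
    rw [setLIntegral_const]
  have hge : ENNReal.ofReal (4 * π) ≤ μH[2] ((Set.range γ)ᶜ ∩ Metric.sphere (0:E3) 1) := by
    refine le_trans sphere_area_ge ?_
    have hsplit : μH[2] (Metric.sphere (0:E3) 1)
        ≤ μH[2] ((Set.range γ)ᶜ ∩ Metric.sphere (0:E3) 1) + μH[2] (Set.range γ) := by
      refine le_trans (measure_mono ?_) (measure_union_le _ _)
      intro x hx
      by_cases h : x ∈ Set.range γ
      · exact Or.inr h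
      · exact Or.inl ⟨h, hx⟩
    rwa [range_null hL hlip, add_zero] at hsplit
  calc ENNReal.ofReal (8 * π) = 2 * ENNReal.ofReal (4 * π) := by
        rw [show (8:ℝ) * π = 2 * (4 * π) by ring,
          ENNReal.ofReal_mul (by norm_num : (0:ℝ) ≤ 2)]
        norm_num
  _ ≤ 2 * μH[2] ((Set.range γ)ᶜ ∩ Metric.sphere (0:E3) 1) := by
        exact mul_le_mul_right hge 2
  _ = _ := hval.symm
  _ ≤ horizonCurve L γ := hmono
end
end
end
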